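/- arXiv:1108.3736 — 4 statements merged into one kernel-verified Lean document; each statement's English description precedes it below -/
import Mathlib

section
/- Let (X,d) be a sequentially Yoneda-complete T1 bounded quasi-metric space such that every compact subset of (X, τ_d) is d⁻¹-precompact. Then the map φ : K_0(X) → CBX, φ(K) = K*, is a topological embedding (injective, continuous, and a homeomorphism onto its image) from K_0(X) equipped with the topology induced by the Hausdorff quasi-metric H_d (basic open balls {L : H_d(K,L) < ε}) into CBX equipped with the Scott topology. -/
open scoped NNReal

/-! Generic sequence notions for an arbitrary "distance" function `ρ`. -/

def IsCauchySeq {α : Type _} (ρ : α → α → ℝ) (u : ℕ → α) : Prop :=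
  ∀ ε : ℝ, 0 < ε → ∃ N, ∀ n m, N ≤ n → n ≤ m → ρ (u n) (u m) < ε

def IsBiCauchySeq {α : Type _} (ρ : α → α → ℝ) (u : ℕ → α) : Prop :=
  ∀ ε : ℝ, 0 < ε → ∃ N, ∀ n m, N ≤ n → N ≤ m → ρ (u n) (u m) < ε

/-- `sup_{m ≥ n} ρ (u m) y`. -/
noncomputable def supTail {α : Type _} (ρ : α → α → ℝ) (u : ℕ → α) (y : α) (n : ℕ) : ℝ :=
  sSup {t | ∃ m, n ≤ m ∧ t = ρ (u m) y}

/-- `x` is a Yoneda limit of `u`:  `ρ x y = inf_n sup_{m ≥ n} ρ (u m) y` for all `y`. -/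
def IsYonedaLim {α : Type _} (ρ : α → α → ℝ) (u : ℕ → α) (x : α) : Prop :=
  ∀ y, ρ x y = sInf (Set.range (supTail ρ u y))

def SeqYonedaCompleteD {α : Type _} (ρ : α → α → ℝ) : Prop :=
  ∀ u, IsCauchySeq ρ u → ∃ x, IsYonedaLim ρ u x

/-- Smyth completeness: every Cauchy sequence converges in the symmetrized metric. -/
def SmythCompleteD {α : Type _} (ρ : α → α → ℝ) : Prop :=
  ∀ u, IsCauchySeq ρ u → ∃ x, ∀ ε : ℝ, 0 < ε → ∃ N, ∀ n, N ≤ n →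
    max (ρ x (u n)) (ρ (u n) x) < ε

/-- `inf_{m ≥ n} ρ e (u m)`. -/
noncomputable def infTail {α : Type _} (ρ : α → α → ℝ) (u : ℕ → α) (e : α) (n : ℕ) : ℝ :=
  sInf {t | ∃ m, n ≤ m ∧ t = ρ e (u m)}

/-- `e` is a finite point: for every Cauchy sequence `u` with Yoneda limit `x`,
`ρ e x = sup_n inf_{m ≥ n} ρ e (u m)`. -/
def IsFinitePoint {α : Type _} (ρ : α → α → ℝ) (e : α) : Prop :=
  ∀ u x, IsCauchySeq ρ u → IsYonedaLim ρ u x →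
    ρ e x = sSup (Set.range (infTail ρ u e))

/-- ω-algebraic: a countable set of finite points such that every point is a Yoneda limit
of a Cauchy sequence of points from it. -/
def OmegaAlgebraicD {α : Type _} (ρ : α → α → ℝ) : Prop :=
  ∃ X0 : Set α, X0.Countable ∧ (∀ e ∈ X0, IsFinitePoint ρ e) ∧
    ∀ x, ∃ u : ℕ → α, (∀ n, u n ∈ X0) ∧ IsCauchySeq ρ u ∧ IsYonedaLim ρ u x

/-- A quasi-metric on `X`. -/
structure QuasiMetric (X : Type _) : Type _ where
  d : X → X → ℝ
  nonneg : ∀ x y, 0 ≤ d x y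
  triangle : ∀ x y z, d x z ≤ d x y + d y z
  eq_iff : ∀ x y, x = y ↔ d x y = 0 ∧ d y x = 0

/-- Formal balls over `X`. -/
abbrev FB (X : Type _) := X × ℝ≥0

/-- Nonempty finite subsets of the space of formal balls. -/
def PFin (X : Type _) : Type _ := {F : Set (FB X) // F.Finite ∧ F.Nonempty}

namespace QuasiMetric

variable {X : Type _} (Q : QuasiMetric X)

def IsT1 : Prop := ∀ x y, Q.d x y = 0 → x = y

def Bounded : Prop := ∃ C : ℝ, ∀ x y, Q.d x y ≤ C

def ball (x : X) (ε : ℝ) : Set X := {y | Q.d x y < ε}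

/-- The topology `τ_d` induced by the quasi-metric. -/
def tau : TopologicalSpace X :=
  TopologicalSpace.generateFrom {s | ∃ x ε, 0 < ε ∧ s = Q.ball x ε}

def dstar (x y : X) : ℝ := max (Q.d x y) (Q.d y x)

def SeqYonedaComplete : Prop := SeqYonedaCompleteD Q.d

def SmythComplete : Prop := SmythCompleteD Q.d

/-- `K` is `d⁻¹`-precompact. -/
def dInvPrecompact (K : Set X) : Prop :=
  ∀ ε : ℝ, 0 < ε → ∃ F : Set X, F.Finite ∧ F ⊆ K ∧ ∀ k ∈ K, ∃ x ∈ F, Q.d k x < ε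

/-- The nonempty compact subsets of `(X, τ_d)`. -/
def K0 : Set (Set X) := {K | K.Nonempty ∧ @IsCompact X Q.tau K}

noncomputable def dPtSet (x : X) (B : Set X) : ℝ := sInf {t | ∃ b ∈ B, t = Q.d x b}

noncomputable def dSetPt (A : Set X) (y : X) : ℝ := sInf {t | ∃ a ∈ A, t = Q.d a y}

/-- The Hausdorff quasi-metric. -/
noncomputable def Hd (A B : Set X) : ℝ :=
  max (sSup {t | ∃ b ∈ B, t = Q.dSetPt A b}) (sSup {t | ∃ a ∈ A, t = Q.dPtSet a B})

/-- Order on formal balls: `(x,r) ⊑ (y,s)  ↔  d x y ≤ r - s`. -/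
def ble (a b : FB X) : Prop := Q.d a.1 b.1 ≤ (a.2 : ℝ) - (b.2 : ℝ)

/-- Auxiliary relation: `(x,r) ≺ (y,s)  ↔  d x y < r - s`. -/
def blt (a b : FB X) : Prop := Q.d a.1 b.1 < (a.2 : ℝ) - (b.2 : ℝ)

def iota (x : X) : FB X := (x, 0)

/-- The quasi-metric `q` on formal balls. -/
noncomputable def q (a b : FB X) : ℝ :=
  max (Q.d a.1 b.1) |(a.2 : ℝ) - (b.2 : ℝ)| + ((b.2 : ℝ) - (a.2 : ℝ))

/-- The Egli–Milner relation `≺_EM` on nonempty finite sets of formal balls. -/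
def em (F G : PFin X) : Prop :=
  (∀ b ∈ G.1, ∃ a ∈ F.1, Q.blt a b) ∧ (∀ a ∈ F.1, ∃ b ∈ G.1, Q.blt a b)

/-- The non-strict Egli–Milner relation `⊑_EM`. -/
def emLE (F G : PFin X) : Prop :=
  (∀ a ∈ F.1, ∃ b ∈ G.1, Q.ble a b) ∧ (∀ b ∈ G.1, ∃ a ∈ F.1, Q.ble a b)

/-- `rF = max { r : (x,r) ∈ F }`. -/
noncomputable def rF (F : PFin X) : ℝ := sSup {t | ∃ p ∈ F.1, t = (p.2 : ℝ)}

/-- `δ(F,G) = min {(r-s) - d x y : (x,r) ∈ F, (y,s) ∈ G, (x,r) ≺ (y,s)}`. -/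
noncomputable def delta (F G : PFin X) : ℝ :=
  sInf {t | ∃ a ∈ F.1, ∃ b ∈ G.1, Q.blt a b ∧ t = ((a.2 : ℝ) - (b.2 : ℝ)) - Q.d a.1 b.1}

/-- The Hausdorff quasi-metric `H_q` on `P_fin(BX)` induced by `q`. -/
noncomputable def Hq (F G : PFin X) : ℝ :=
  max (sSup {t | ∃ a ∈ F.1, t = sInf {s | ∃ b ∈ G.1, s = Q.q a b}})
      (sSup {t | ∃ b ∈ G.1, t = sInf {s | ∃ a ∈ F.1, s = Q.q a b}})

/-- ω-chains in `(P_fin(BX), ≺_EM)`; `c n` plays the role of `F_{n+1}`. -/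
def Chain : Type _ := {c : ℕ → PFin X // ∀ n, Q.em (c n) (c (n + 1))}

def chainLE (c c' : Q.Chain) : Prop := ∀ n, ∃ m, Q.em (c.1 n) (c'.1 m)

def chainEquiv (c c' : Q.Chain) : Prop := Q.chainLE c c' ∧ Q.chainLE c' c

lemma blt_trans {a b c : FB X} (h1 : Q.blt a b) (h2 : Q.blt b c) : Q.blt a c := by
  have h3 := Q.triangle a.1 b.1 c.1
  unfold blt at h1 h2 ⊢
  linarith

lemma em_trans {F G H : PFin X} (h1 : Q.em F G) (h2 : Q.em G H) : Q.em F H := by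
  constructor
  · intro b hb
    obtain ⟨a, ha, hab⟩ := h2.1 b hb
    obtain ⟨a', ha', h'⟩ := h1.1 a ha
    exact ⟨a', ha', Q.blt_trans h' hab⟩
  · intro a ha
    obtain ⟨b, hb, hab⟩ := h1.2 a ha
    obtain ⟨c, hc, hbc⟩ := h2.2 b hb
    exact ⟨c, hc, Q.blt_trans hab hbc⟩

lemma chainLE_refl (c : Q.Chain) : Q.chainLE c c := fun n => ⟨n + 1, c.2 n⟩

lemma chainLE_trans {a b c : Q.Chain} (h1 : Q.chainLE a b) (h2 : Q.chainLE b c) :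
    Q.chainLE a c := by
  intro n
  obtain ⟨m, hm⟩ := h1 n
  obtain ⟨k, hk⟩ := h2 m
  exact ⟨k, Q.em_trans hm hk⟩

def chainSetoid : Setoid Q.Chain where
  r := Q.chainEquiv
  iseqv := ⟨fun c => ⟨Q.chainLE_refl c, Q.chainLE_refl c⟩,
    fun h => ⟨h.2, h.1⟩,
    fun h1 h2 => ⟨Q.chainLE_trans h1.1 h2.1, Q.chainLE_trans h2.2 h1.2⟩⟩

/-- The ω-Plotkin domain `CBX`: equivalence classes of ω-chains in `(P_fin(BX), ≺_EM)`. -/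
def CBX : Type _ := Quotient Q.chainSetoid

/-- The partial order of `CBX`. -/
def cbLE : Q.CBX → Q.CBX → Prop :=
  Quotient.lift₂ Q.chainLE (by
    intro a b a' b' ha hb
    have ha' : Q.chainEquiv a a' := ha
    have hb' : Q.chainEquiv b b' := hb
    exact propext ⟨fun h => Q.chainLE_trans (Q.chainLE_trans ha'.2 h) hb'.1,
      fun h => Q.chainLE_trans (Q.chainLE_trans ha'.1 h) hb'.2⟩)

def chainWB (c c' : Q.Chain) : Prop := ∃ m, ∀ n, Q.em (c.1 n) (c'.1 m)

/-- The way-below relation of `CBX`. -/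
def cbWB : Q.CBX → Q.CBX → Prop :=
  Quotient.lift₂ Q.chainWB (by
    intro a b a' b' ha hb
    have ha' : Q.chainEquiv a a' := ha
    have hb' : Q.chainEquiv b b' := hb
    apply propext
    constructor
    · rintro ⟨m, hm⟩
      obtain ⟨k, hk⟩ := hb'.1 m
      refine ⟨k, fun n => ?_⟩
      obtain ⟨p, hp⟩ := ha'.2 n
      exact Q.em_trans hp (Q.em_trans (hm p) hk)
    · rintro ⟨m, hm⟩
      obtain ⟨k, hk⟩ := hb'.2 m
      refine ⟨k, fun n => ?_⟩
      obtain ⟨p, hp⟩ := ha'.1 n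
      exact Q.em_trans hp (Q.em_trans (hm p) hk))

/-- The Scott topology of `CBX`, generated by the sets `↟I`. -/
def scottTop : TopologicalSpace Q.CBX :=
  TopologicalSpace.generateFrom {s | ∃ I : Q.CBX, s = {J | Q.cbWB I J}}

def upSet (F : PFin X) : Set (FB X) := {b | ∃ a ∈ F.1, Q.ble a b}

/-- `I⁺ = ⋂_n ↑F_n` for a representing chain. -/
def Iplus (c : Q.Chain) : Set (FB X) := ⋂ n, Q.upSet (c.1 n)

noncomputable def IplusQ (I : Q.CBX) : Set (FB X) := Q.Iplus (Quotient.out I)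

/-- `r̄ I = inf { rF : F occurs in some chain representing I }`. -/
noncomputable def rbar (I : Q.CBX) : ℝ :=
  sInf {t | ∃ c : Q.Chain, Quotient.mk Q.chainSetoid c = I ∧ ∃ n, t = rF (c.1 n)}

/-- `c` is a standard representation of `K`: `c n` (playing the role of `F_{n+1}`) is
`{(x_i^j, 1/(n+1)) : 1 ≤ j ≤ n+1, 1 ≤ i ≤ m_j}` where the `x_i^j ∈ K` satisfy
`∀ y ∈ K, ∃ i, d (x_i^j) y < 1/(2 j²)`. -/
def IsStdRep (K : Set X) (c : Q.Chain) : Prop :=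
  ∃ (m : ℕ → ℕ) (x : ℕ → ℕ → X),
    (∀ j i, 1 ≤ j → 1 ≤ i → i ≤ m j → x j i ∈ K) ∧
    (∀ j, 1 ≤ j → ∀ y ∈ K, ∃ i, 1 ≤ i ∧ i ≤ m j ∧ Q.d (x j i) y < 1 / (2 * (j : ℝ) ^ 2)) ∧
    (∀ n : ℕ, (c.1 n).1 =
      {p : FB X | ∃ j i, 1 ≤ j ∧ j ≤ n + 1 ∧ 1 ≤ i ∧ i ≤ m j ∧
        p = (x j i, ((n : ℝ≥0) + 1)⁻¹)})

/-- `D` on representing chains: `sup_n inf_m H_q(F_n, G_m)`. -/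
noncomputable def Dchain (c c' : Q.Chain) : ℝ :=
  sSup {t | ∃ n, t = sInf {s | ∃ m, s = Q.Hq (c.1 n) (c'.1 m)}}

/-- The quasi-metric `D` on `CBX`. -/
noncomputable def D (I J : Q.CBX) : ℝ := Q.Dchain (Quotient.out I) (Quotient.out J)

/-- The topology induced by `D` on `CBX`. -/
def DTop : TopologicalSpace Q.CBX :=
  TopologicalSpace.generateFrom
    {s | ∃ (I : Q.CBX) (ε : ℝ), 0 < ε ∧ s = {J | Q.D I J < ε}}

/-- The hyperspace `K_0(X)` as a type. -/
def K0T : Type _ := {K : Set X // K.Nonempty ∧ @IsCompact X Q.tau K}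

/-- The Vietoris topology on `K_0(X)`. -/
def vietoris : TopologicalSpace Q.K0T :=
  TopologicalSpace.generateFrom
    ({s | ∃ V : Set X, @IsOpen X Q.tau V ∧ s = {K : Q.K0T | (K.1 ∩ V).Nonempty}} ∪
     {s | ∃ V : Set X, @IsOpen X Q.tau V ∧ s = {K : Q.K0T | K.1 ⊆ V}})

/-- The topology of the Hausdorff quasi-metric on `K_0(X)`. -/
def hdTop : TopologicalSpace Q.K0T :=
  TopologicalSpace.generateFrom
    {s | ∃ (K : Q.K0T) (ε : ℝ), 0 < ε ∧ s = {L : Q.K0T | Q.Hd K.1 L.1 < ε}}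

/-- Round ideals of `(P_fin(BX), ≺_EM)`. -/
def IsRoundIdeal (I : Set (PFin X)) : Prop :=
  I.Nonempty ∧ (∀ F G : PFin X, Q.em F G → G ∈ I → F ∈ I) ∧
  (∀ F ∈ I, ∀ G ∈ I, ∃ H ∈ I, Q.em F H ∧ Q.em G H)

end QuasiMetric

/-! ### Auxiliary development for `stmt10` -/

open TopologicalSpace Set

namespace QuasiMetric

variable {X : Type} (Q : QuasiMetric X)

/-! #### Arithmetic helpers -/

lemma npos (n : ℕ) : (0:ℝ) < (n:ℝ)+1 := by positivity

lemma inv_sub_inv' (n : ℕ) :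
    ((n:ℝ)+1)⁻¹ - ((n:ℝ)+2)⁻¹ = (((n:ℝ)+1)*((n:ℝ)+2))⁻¹ := by
  have h1 : ((n:ℝ)+1) ≠ 0 := by positivity
  have h2 : ((n:ℝ)+2) ≠ 0 := by positivity
  field_simp
  ring

lemma ar2 (n : ℕ) : (2*((n:ℝ)+1)^2)⁻¹ ≤ ((n:ℝ)+1)⁻¹ := by
  have h0 := npos n
  exact inv_anti₀ h0 (by nlinarith)

lemma ar3 (n : ℕ) : (2*((n:ℝ)+1)^2)⁻¹ ≤ ((n:ℝ)+1)⁻¹ - ((n:ℝ)+2)⁻¹ := by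
  rw [inv_sub_inv']
  have h0 := npos n
  exact inv_anti₀ (by positivity) (by nlinarith)

lemma ar3' (n : ℕ) : (2*((n:ℝ)+2)^2)⁻¹ ≤ ((n:ℝ)+1)⁻¹ - ((n:ℝ)+2)⁻¹ := by
  rw [inv_sub_inv']
  have h0 := npos n
  exact inv_anti₀ (by positivity) (by nlinarith)

lemma ar4 (n : ℕ) : (0:ℝ) < ((n:ℝ)+1)⁻¹ - ((n:ℝ)+2)⁻¹ := by
  rw [inv_sub_inv']
  positivity

lemma arA1 {u : ℝ} (hu : 1 ≤ u) : (2*u^2)⁻¹ + (4*u)⁻¹ + (8*u+1)⁻¹ ≤ u⁻¹ := by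
  have h0 : 0 < u := by linarith
  have h2 : (2*u^2)⁻¹ ≤ (2*u)⁻¹ := inv_anti₀ (by positivity) (by nlinarith)
  have h3 : (8*u+1)⁻¹ ≤ (8*u)⁻¹ := inv_anti₀ (by positivity) (by linarith)
  have e : (2*u)⁻¹ + (4*u)⁻¹ + (8*u)⁻¹ ≤ u⁻¹ := by
    rw [mul_inv, mul_inv, mul_inv]
    have h4 : 0 ≤ u⁻¹ := by positivity
    nlinarith
  linarith

lemma arA2 {u : ℝ} (hu : 1 ≤ u) : (4*u)⁻¹ + (2*(8*u+1)^2)⁻¹ + (8*u+1)⁻¹ ≤ u⁻¹ := by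
  have h0 : 0 < u := by linarith
  have h2 : (2*(8*u+1)^2)⁻¹ ≤ (8*u)⁻¹ := inv_anti₀ (by positivity) (by nlinarith)
  have h3 : (8*u+1)⁻¹ ≤ (8*u)⁻¹ := inv_anti₀ (by positivity) (by linarith)
  have e : (4*u)⁻¹ + (8*u)⁻¹ + (8*u)⁻¹ ≤ u⁻¹ := by
    rw [mul_inv, mul_inv]
    have h4 : 0 ≤ u⁻¹ := by positivity
    nlinarith
  linarith

lemma exists_inv_lt {δ : ℝ} (hδ : 0 < δ) : ∃ n : ℕ, ((n:ℝ)+1)⁻¹ < δ := by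
  obtain ⟨n, hn⟩ := exists_nat_gt δ⁻¹
  exact ⟨n, by rw [inv_lt_comm₀ (npos n) hδ]; exact hn.trans (lt_add_one _)⟩

lemma coe_rad (n : ℕ) : ((((n:ℝ≥0)+1)⁻¹ : ℝ≥0) : ℝ) = ((n:ℝ)+1)⁻¹ := by push_cast; ring

lemma coe_rad' (n : ℕ) : (((((n+1:ℕ):ℝ≥0)+1)⁻¹ : ℝ≥0) : ℝ) = ((n:ℝ)+2)⁻¹ := by
  push_cast; ring

/-! #### Basic facts -/

lemma d_self (x : X) : Q.d x x = 0 := ((Q.eq_iff x x).mp rfl).1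

lemma isOpen_ball {x : X} {ε : ℝ} (hε : 0 < ε) : @IsOpen X Q.tau (Q.ball x ε) :=
  isOpen_generateFrom_of_mem ⟨x, ε, hε, rfl⟩

lemma limit_mem (hT1 : Q.IsT1) {K : Set X} (hK : @IsCompact X Q.tau K)
    {x : X} (h : ∀ n : ℕ, ∃ w ∈ K, Q.d w x < ((n:ℝ)+1)⁻¹) : x ∈ K := by
  letI := Q.tau
  by_contra hx
  have hpos : ∀ y ∈ K, 0 < Q.d y x := by
    intro y hy
    rcases lt_or_eq_of_le (Q.nonneg y x) with h' | h'
    · exact h'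
    · exact absurd (hT1 y x h'.symm) (by rintro rfl; exact hx hy)
  have hcov : K ⊆ ⋃ y : K, Q.ball y.1 (Q.d y.1 x / 2) := by
    intro z hz
    refine Set.mem_iUnion.2 ⟨⟨z, hz⟩, ?_⟩
    show Q.d z z < Q.d z x / 2
    rw [Q.d_self]
    exact half_pos (hpos z hz)
  obtain ⟨t, ht⟩ := hK.elim_finite_subcover _
    (fun y : K => Q.isOpen_ball (half_pos (hpos y.1 y.2))) hcov
  obtain ⟨w0, hw0K, _⟩ := h 0
  have htne : t.Nonempty := by
    rcases Set.mem_iUnion₂.1 (ht hw0K) with ⟨y, hy, _⟩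
    exact ⟨y, hy⟩
  have htne' : (t.image (fun y : K => Q.d y.1 x / 2)).Nonempty := htne.image _
  set μ := (t.image (fun y : K => Q.d y.1 x / 2)).min' htne' with hμ
  have hμpos : 0 < μ := by
    rw [hμ]
    apply (Finset.lt_min'_iff _ _).2
    intro b hb
    obtain ⟨y, hy, rfl⟩ := Finset.mem_image.1 hb
    exact half_pos (hpos y.1 y.2)
  obtain ⟨n, hn⟩ := exists_inv_lt hμpos
  obtain ⟨w, hwK, hw⟩ := h n
  have hwμ : Q.d w x < μ := hw.trans hn
  rcases Set.mem_iUnion₂.1 (ht hwK) with ⟨y, hy, hball⟩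
  have hb : Q.d y.1 w < Q.d y.1 x / 2 := hball
  have htri := Q.triangle y.1 w x
  have hμle : μ ≤ Q.d y.1 x / 2 :=
    Finset.min'_le _ _ (Finset.mem_image_of_mem _ hy)
  linarith

/-! #### Hausdorff distance facts -/

lemma dSetPt_le {A : Set X} {y a : X} (ha : a ∈ A) : Q.dSetPt A y ≤ Q.d a y :=
  csInf_le ⟨0, by rintro t ⟨a', _, rfl⟩; exact Q.nonneg _ _⟩ ⟨a, ha, rfl⟩

lemma dPtSet_le {B : Set X} {x b : X} (hb : b ∈ B) : Q.dPtSet x B ≤ Q.d x b :=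
  csInf_le ⟨0, by rintro t ⟨b', _, rfl⟩; exact Q.nonneg _ _⟩ ⟨b, hb, rfl⟩

lemma exists_dSetPt_lt {A : Set X} {y : X} {r : ℝ} (hA : A.Nonempty)
    (h : Q.dSetPt A y < r) : ∃ a ∈ A, Q.d a y < r := by
  have hne : {t | ∃ a ∈ A, t = Q.d a y}.Nonempty := ⟨Q.d hA.some y, hA.some, hA.some_mem, rfl⟩
  obtain ⟨t, ⟨a, ha, rfl⟩, hlt⟩ := exists_lt_of_csInf_lt hne h
  exact ⟨a, ha, hlt⟩

lemma exists_dPtSet_lt {B : Set X} {x : X} {r : ℝ} (hB : B.Nonempty)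
    (h : Q.dPtSet x B < r) : ∃ b ∈ B, Q.d x b < r := by
  have hne : {t | ∃ b ∈ B, t = Q.d x b}.Nonempty := ⟨Q.d x hB.some, hB.some, hB.some_mem, rfl⟩
  obtain ⟨t, ⟨b, hb, rfl⟩, hlt⟩ := exists_lt_of_csInf_lt hne h
  exact ⟨b, hb, hlt⟩

lemma dSetPt_le_Hd {A B : Set X} {C : ℝ} (hC : ∀ x y, Q.d x y ≤ C)
    (hA : A.Nonempty) {b : X} (hb : b ∈ B) : Q.dSetPt A b ≤ Q.Hd A B := by
  have hbdd : BddAbove {t | ∃ b' ∈ B, t = Q.dSetPt A b'} := by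
    refine ⟨C, ?_⟩
    rintro t ⟨b', _, rfl⟩
    exact le_trans (Q.dSetPt_le hA.some_mem) (hC _ _)
  have h1 : Q.dSetPt A b ≤ sSup {t | ∃ b' ∈ B, t = Q.dSetPt A b'} :=
    le_csSup hbdd ⟨b, hb, rfl⟩
  exact le_trans h1 (le_max_left _ _)

lemma dPtSet_le_Hd {A B : Set X} {C : ℝ} (hC : ∀ x y, Q.d x y ≤ C)
    (hB : B.Nonempty) {a : X} (ha : a ∈ A) : Q.dPtSet a B ≤ Q.Hd A B := by
  have hbdd : BddAbove {t | ∃ a' ∈ A, t = Q.dPtSet a' B} := by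
    refine ⟨C, ?_⟩
    rintro t ⟨a', _, rfl⟩
    exact le_trans (Q.dPtSet_le hB.some_mem) (hC _ _)
  have h1 : Q.dPtSet a B ≤ sSup {t | ∃ a' ∈ A, t = Q.dPtSet a' B} :=
    le_csSup hbdd ⟨a, ha, rfl⟩
  exact le_trans h1 (le_max_right _ _)

lemma Hd_lt {A B : Set X} {r r' : ℝ} (hA : A.Nonempty) (hB : B.Nonempty) (hrr : r' < r)
    (h1 : ∀ b ∈ B, Q.dSetPt A b ≤ r') (h2 : ∀ a ∈ A, Q.dPtSet a B ≤ r') :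
    Q.Hd A B < r := by
  have hne1 : {t | ∃ b ∈ B, t = Q.dSetPt A b}.Nonempty :=
    ⟨Q.dSetPt A hB.some, hB.some, hB.some_mem, rfl⟩
  have hne2 : {t | ∃ a ∈ A, t = Q.dPtSet a B}.Nonempty :=
    ⟨Q.dPtSet hA.some B, hA.some, hA.some_mem, rfl⟩
  apply max_lt
  · refine lt_of_le_of_lt (csSup_le hne1 ?_) hrr
    rintro t ⟨b, hb, rfl⟩
    exact h1 b hb
  · refine lt_of_le_of_lt (csSup_le hne2 ?_) hrr
    rintro t ⟨a, ha, rfl⟩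
    exact h2 a ha

lemma Hd_self_lt {A : Set X} (hA : A.Nonempty) {ε : ℝ} (hε : 0 < ε) : Q.Hd A A < ε := by
  refine Q.Hd_lt hA hA hε ?_ ?_
  · intro b hb
    exact le_trans (Q.dSetPt_le hb) (le_of_eq (Q.d_self b))
  · intro a ha
    exact le_trans (Q.dPtSet_le ha) (le_of_eq (Q.d_self a))

/-! #### Nets and good representations -/

lemma exists_net {K : Set X} (hne : K.Nonempty) (hK : @IsCompact X Q.tau K)
    (hpre : Q.dInvPrecompact K) {ε : ℝ} (hε : 0 < ε) :
    ∃ S : Set X, S.Finite ∧ S.Nonempty ∧ S ⊆ K ∧ (∀ y ∈ K, ∃ x ∈ S, Q.d x y < ε) ∧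
      (∀ y ∈ K, ∃ x ∈ S, Q.d y x < ε) := by
  classical
  letI := Q.tau
  have hcov : K ⊆ ⋃ y : K, Q.ball y.1 ε := by
    intro z hz
    refine Set.mem_iUnion.2 ⟨⟨z, hz⟩, ?_⟩
    show Q.d z z < ε
    rw [Q.d_self]
    exact hε
  obtain ⟨t, ht⟩ := hK.elim_finite_subcover _ (fun y : K => Q.isOpen_ball hε) hcov
  obtain ⟨F, hFfin, hFK, hF⟩ := hpre ε hε
  refine ⟨((t.image (fun y : K => y.1)) : Finset X) ∪ F ∪ {hne.some}, ?_, ?_, ?_, ?_, ?_⟩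
  · exact (((t.image (fun y : K => y.1)).finite_toSet).union hFfin).union
      (Set.finite_singleton _)
  · exact ⟨hne.some, Or.inr rfl⟩
  · rintro z ((hz | hz) | hz)
    · obtain ⟨y, _, rfl⟩ := Finset.mem_image.1 hz
      exact y.2
    · exact hFK hz
    · rw [Set.mem_singleton_iff] at hz
      rw [hz]
      exact hne.some_mem
  · intro y hy
    rcases Set.mem_iUnion₂.1 (ht hy) with ⟨w, hw, hball⟩
    exact ⟨w.1, Or.inl (Or.inl (Finset.mem_image_of_mem _ hw)), hball⟩
  · intro y hy
    obtain ⟨x, hx, h⟩ := hF y hy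
    exact ⟨x, Or.inl (Or.inr hx), h⟩

lemma enum_finite {S : Set X} (hS : S.Finite) (hne : S.Nonempty) (x0 : X) :
    ∃ (k : ℕ) (f : ℕ → X), 1 ≤ k ∧ (∀ i, 1 ≤ i → i ≤ k → f i ∈ S) ∧
      ∀ s ∈ S, ∃ i, 1 ≤ i ∧ i ≤ k ∧ f i = s := by
  classical
  obtain ⟨l, hmem, hlen⟩ : ∃ l : List X, (∀ a, a ∈ l ↔ a ∈ S) ∧ 1 ≤ l.length := by
    refine ⟨hS.toFinset.toList, ?_, ?_⟩
    · intro a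
      rw [Finset.mem_toList, hS.mem_toFinset]
    · rw [Finset.length_toList]
      exact Finset.card_pos.mpr (hS.toFinset_nonempty.2 hne)
  refine ⟨l.length, fun i => l.getD (i-1) x0, hlen, ?_, ?_⟩
  · intro i h1 h2
    have hlt : i - 1 < l.length := by omega
    show l.getD (i-1) x0 ∈ S
    rw [List.getD_eq_getElem l x0 hlt]
    exact (hmem _).1 (List.getElem_mem _)
  · intro s hs
    obtain ⟨n, hn, hget⟩ := List.mem_iff_getElem.1 ((hmem s).2 hs)
    refine ⟨n+1, by omega, by omega, ?_⟩
    show l.getD (n+1-1) x0 = s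
    have heq : n + 1 - 1 = n := by omega
    rw [heq, List.getD_eq_getElem l x0 hn]
    exact hget

/-- A "good representation": all points of level `n` are in `K` with radius `(n+1)⁻¹`,
and the points at level `n` form both a `d`-net and a `d⁻¹`-net of `K` at
precision `(2(n+1)²)⁻¹`. -/
def GR (K : Set X) (c : Q.Chain) : Prop :=
  ∀ n : ℕ, (∀ p ∈ (c.1 n).1, p.1 ∈ K ∧ (p.2 : ℝ) = ((n:ℝ)+1)⁻¹) ∧
    (∀ y ∈ K, ∃ p ∈ (c.1 n).1, Q.d p.1 y < (2*((n:ℝ)+1)^2)⁻¹) ∧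
    (∀ y ∈ K, ∃ p ∈ (c.1 n).1, Q.d y p.1 < (2*((n:ℝ)+1)^2)⁻¹)

lemma exists_goodRep {K : Set X} (hne : K.Nonempty) (hK : @IsCompact X Q.tau K)
    (hpre : Q.dInvPrecompact K) : ∃ c : Q.Chain, Q.IsStdRep K c ∧ Q.GR K c := by
  classical
  have hnet : ∀ j : ℕ, ∃ (k : ℕ) (f : ℕ → X), 1 ≤ k ∧ (∀ i, 1 ≤ i → i ≤ k → f i ∈ K) ∧
      (∀ y ∈ K, ∃ i, 1 ≤ i ∧ i ≤ k ∧ Q.d (f i) y < (2*((j:ℝ)+1)^2)⁻¹) ∧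
      (∀ y ∈ K, ∃ i, 1 ≤ i ∧ i ≤ k ∧ Q.d y (f i) < (2*((j:ℝ)+1)^2)⁻¹) := by
    intro j
    obtain ⟨S, hSfin, hSne, hSK, h1, h2⟩ := Q.exists_net hne hK hpre
      (ε := (2*((j:ℝ)+1)^2)⁻¹) (by positivity)
    obtain ⟨k, f, hk, hf1, hf2⟩ := enum_finite hSfin hSne hne.some
    refine ⟨k, f, hk, fun i a b => hSK (hf1 i a b), ?_, ?_⟩
    · intro y hy
      obtain ⟨x, hx, hd⟩ := h1 y hy
      obtain ⟨i, hi1, hi2, rfl⟩ := hf2 x hx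
      exact ⟨i, hi1, hi2, hd⟩
    · intro y hy
      obtain ⟨x, hx, hd⟩ := h2 y hy
      obtain ⟨i, hi1, hi2, rfl⟩ := hf2 x hx
      exact ⟨i, hi1, hi2, hd⟩
  choose k f hk hfK hdnet hinv using hnet
  set Fs : ℕ → Set (FB X) := fun n =>
    {p : FB X | ∃ j i, 1 ≤ j ∧ j ≤ n + 1 ∧ 1 ≤ i ∧ i ≤ k (j-1) ∧
      p = (f (j-1) i, ((n : ℝ≥0) + 1)⁻¹)} with hFs
  have hmemK : ∀ j i, 1 ≤ i → i ≤ k (j-1) → f (j-1) i ∈ K := fun j i h2 h3 => hfK _ i h2 h3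
  have hfin : ∀ n, (Fs n).Finite := by
    intro n
    have hsub : Fs n ⊆ (fun ji : ℕ × ℕ => ((f (ji.1 - 1) ji.2 : X), (((n:ℝ≥0)+1)⁻¹ : ℝ≥0))) ''
        (Set.Iic (n+1) ×ˢ Set.Iic ((Finset.range (n+2)).sup (fun j => k (j-1)))) := by
      rintro p ⟨j, i, h1, h2, h3, h4, rfl⟩
      exact ⟨(j, i), ⟨h2, le_trans h4 (Finset.le_sup (f := fun j => k (j-1))
        (Finset.mem_range.2 (by omega)))⟩, rfl⟩
    exact (((Set.finite_Iic _).prod (Set.finite_Iic _)).image _).subset hsub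
  have hne' : ∀ n, (Fs n).Nonempty := by
    intro n
    exact ⟨(f 0 1, ((n : ℝ≥0) + 1)⁻¹), 1, 1, le_refl 1, by omega, le_refl 1, hk 0, rfl⟩
  have hchain : ∀ n, Q.em ⟨Fs n, hfin n, hne' n⟩ ⟨Fs (n+1), hfin (n+1), hne' (n+1)⟩ := by
    intro n
    constructor
    · rintro b ⟨j, i, hj1, hj2, hi1, hi2, rfl⟩
      rcases Nat.lt_or_ge j (n+2) with hj | hj
      · refine ⟨(f (j-1) i, ((n : ℝ≥0) + 1)⁻¹), ⟨j, i, hj1, by omega, hi1, hi2, rfl⟩, ?_⟩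
        show Q.d (f (j-1) i) (f (j-1) i) <
          ((((n : ℝ≥0) + 1)⁻¹ : ℝ≥0) : ℝ) - (((((n+1:ℕ) : ℝ≥0) + 1)⁻¹ : ℝ≥0) : ℝ)
        rw [Q.d_self, coe_rad, coe_rad']
        exact ar4 n
      · have hj' : j = n + 2 := by omega
        subst hj'
        obtain ⟨i', hi'1, hi'2, hd⟩ := hdnet n (f (n+2-1) i) (hmemK (n+2) i hi1 hi2)
        refine ⟨(f ((n+1)-1) i', ((n : ℝ≥0) + 1)⁻¹),
          ⟨n+1, i', by omega, le_refl _, hi'1, hi'2, rfl⟩, ?_⟩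
        show Q.d (f ((n+1)-1) i') (f (n+2-1) i) <
          ((((n : ℝ≥0) + 1)⁻¹ : ℝ≥0) : ℝ) - (((((n+1:ℕ) : ℝ≥0) + 1)⁻¹ : ℝ≥0) : ℝ)
        rw [coe_rad, coe_rad']
        exact lt_of_lt_of_le hd (ar3 n)
    · rintro a ⟨j, i, hj1, hj2, hi1, hi2, rfl⟩
      obtain ⟨i', hi'1, hi'2, hd⟩ := hinv (n+1) (f (j-1) i) (hmemK j i hi1 hi2)
      refine ⟨(f ((n+2)-1) i', (((n+1:ℕ) : ℝ≥0) + 1)⁻¹),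
        ⟨n+2, i', by omega, le_refl _, hi'1, hi'2, rfl⟩, ?_⟩
      show Q.d (f (j-1) i) (f ((n+2)-1) i') <
        ((((n : ℝ≥0) + 1)⁻¹ : ℝ≥0) : ℝ) - (((((n+1:ℕ) : ℝ≥0) + 1)⁻¹ : ℝ≥0) : ℝ)
      rw [coe_rad, coe_rad']
      refine lt_of_lt_of_le (lt_of_lt_of_le hd (le_of_eq ?_)) (ar3' n)
      push_cast
      ring
  refine ⟨⟨fun n => ⟨Fs n, hfin n, hne' n⟩, hchain⟩, ?_, ?_⟩
  · refine ⟨fun j => k (j-1), fun j i => f (j-1) i, ?_, ?_, fun n => rfl⟩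
    · intro j i _ h2 h3
      exact hmemK j i h2 h3
    · intro j hj y hy
      obtain ⟨i, hi1, hi2, hd⟩ := hdnet (j-1) y hy
      refine ⟨i, hi1, hi2, ?_⟩
      have hcast : ((j-1:ℕ):ℝ) = (j:ℝ) - 1 := by
        push_cast [hj]
        ring
      rw [hcast] at hd
      calc Q.d (f (j-1) i) y < (2*((j:ℝ)-1+1)^2)⁻¹ := hd
        _ = 1/(2*(j:ℝ)^2) := by rw [one_div]; ring_nf
  · intro n
    refine ⟨?_, ?_, ?_⟩
    · rintro p ⟨j, i, hj1, hj2, hi1, hi2, rfl⟩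
      exact ⟨hmemK j i hi1 hi2, coe_rad n⟩
    · intro y hy
      obtain ⟨i, hi1, hi2, hd⟩ := hdnet n y hy
      exact ⟨(f ((n+1)-1) i, ((n : ℝ≥0) + 1)⁻¹),
        ⟨n+1, i, by omega, le_refl _, hi1, hi2, rfl⟩, hd⟩
    · intro y hy
      obtain ⟨i, hi1, hi2, hd⟩ := hinv n y hy
      exact ⟨(f ((n+1)-1) i, ((n : ℝ≥0) + 1)⁻¹),
        ⟨n+1, i, by omega, le_refl _, hi1, hi2, rfl⟩, hd⟩

/-! #### Injectivity ingredient -/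

lemma subset_of_chainLE (hT1 : Q.IsT1) {K L : Set X} (hK : @IsCompact X Q.tau K)
    {cK cL : Q.Chain} (hGK : Q.GR K cK) (hGL : Q.GR L cL) (h : Q.chainLE cK cL) :
    L ⊆ K := by
  intro x hx
  apply Q.limit_mem hT1 hK
  intro n
  obtain ⟨m, hm⟩ := h n
  obtain ⟨p, hp, hdp⟩ := (hGL m).2.1 x hx
  obtain ⟨a, ha, hab⟩ := hm.1 p hp
  have h1 : (a.2:ℝ) = ((n:ℝ)+1)⁻¹ := ((hGK n).1 a ha).2
  have h2 : (p.2:ℝ) = ((m:ℝ)+1)⁻¹ := ((hGL m).1 p hp).2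
  have hab' : Q.d a.1 p.1 < (a.2:ℝ) - (p.2:ℝ) := hab
  have htri := Q.triangle a.1 p.1 x
  have haK : a.1 ∈ K := ((hGK n).1 a ha).1
  have har := ar2 m
  rw [h1, h2] at hab'
  exact ⟨a.1, haK, by linarith⟩

/-! #### Core lemma for Scott-basic preimages being `H_d`-open -/

lemma A_core {C : ℝ} (hC : ∀ x y, Q.d x y ≤ C) {K L : Set X}
    (hKne : K.Nonempty) (hLne : L.Nonempty)
    {cK cL cI : Q.Chain} (hGK : Q.GR K cK) (hGL : Q.GR L cL) {m : ℕ}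
    (hem : ∀ n, Q.em (cI.1 n) (cK.1 m)) (hHd : Q.Hd K L < (4*((m:ℝ)+1))⁻¹) :
    ∀ n, Q.em (cI.1 n) (cL.1 (8*m+8)) := by
  intro n
  have hu : (1:ℝ) ≤ (m:ℝ)+1 := by
    have : (0:ℝ) ≤ (m:ℝ) := Nat.cast_nonneg m
    linarith
  have hcast : ((8*m+8:ℕ):ℝ) = 8*((m:ℝ)+1) := by push_cast; ring
  constructor
  · rintro b hb
    have hbL : b.1 ∈ L := ((hGL (8*m+8)).1 b hb).1
    have hbr : (b.2:ℝ) = (((8*m+8:ℕ):ℝ)+1)⁻¹ := ((hGL (8*m+8)).1 b hb).2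
    rw [hcast] at hbr
    have h1 : Q.dSetPt K b.1 < (4*((m:ℝ)+1))⁻¹ :=
      lt_of_le_of_lt (Q.dSetPt_le_Hd hC hKne hbL) hHd
    obtain ⟨w, hwK, hw⟩ := Q.exists_dSetPt_lt hKne h1
    obtain ⟨p, hp, hdp⟩ := (hGK m).2.1 w hwK
    have hpr : (p.2:ℝ) = ((m:ℝ)+1)⁻¹ := ((hGK m).1 p hp).2
    obtain ⟨a, ha, hab⟩ := (hem n).1 p hp
    have hab' : Q.d a.1 p.1 < (a.2:ℝ) - (p.2:ℝ) := hab
    rw [hpr] at hab'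
    refine ⟨a, ha, ?_⟩
    show Q.d a.1 b.1 < (a.2:ℝ) - (b.2:ℝ)
    rw [hbr]
    have t1 := Q.triangle a.1 p.1 b.1
    have t2 := Q.triangle p.1 w b.1
    have har := arA1 hu
    linarith
  · rintro a ha
    obtain ⟨p, hp, hap⟩ := (hem n).2 a ha
    have hpK : p.1 ∈ K := ((hGK m).1 p hp).1
    have hpr : (p.2:ℝ) = ((m:ℝ)+1)⁻¹ := ((hGK m).1 p hp).2
    have hap' : Q.d a.1 p.1 < (a.2:ℝ) - (p.2:ℝ) := hap
    rw [hpr] at hap'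
    have h2 : Q.dPtSet p.1 L < (4*((m:ℝ)+1))⁻¹ :=
      lt_of_le_of_lt (Q.dPtSet_le_Hd hC hLne hpK) hHd
    obtain ⟨y, hyL, hy⟩ := Q.exists_dPtSet_lt hLne h2
    obtain ⟨q, hq, hdq⟩ := (hGL (8*m+8)).2.2 y hyL
    have hqr : (q.2:ℝ) = (((8*m+8:ℕ):ℝ)+1)⁻¹ := ((hGL (8*m+8)).1 q hq).2
    rw [hcast] at hqr
    have hdq' : Q.d y q.1 < (2*(8*((m:ℝ)+1)+1)^2)⁻¹ := by
      refine lt_of_lt_of_le hdq (le_of_eq ?_)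
      rw [hcast]
    refine ⟨q, hq, ?_⟩
    show Q.d a.1 q.1 < (a.2:ℝ) - (q.2:ℝ)
    rw [hqr]
    have t1 := Q.triangle a.1 p.1 q.1
    have t2 := Q.triangle p.1 y q.1
    have har := arA2 hu
    linarith

/-! #### Fattened chains and core lemmas for `H_d`-balls being induced-open -/

/-- The chain obtained by enlarging every radius by `δ`. -/
def fatten (c : Q.Chain) (δ : ℝ≥0) : Q.Chain := by
  refine ⟨fun n => ⟨(fun p : FB X => (p.1, p.2 + δ)) '' (c.1 n).1,
    ((c.1 n).2.1).image _, ((c.1 n).2.2).image _⟩, ?_⟩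
  intro n
  constructor
  · rintro b ⟨q, hq, rfl⟩
    obtain ⟨a, ha, hab⟩ := (c.2 n).1 q hq
    refine ⟨(a.1, a.2 + δ), ⟨a, ha, rfl⟩, ?_⟩
    have hab' : Q.d a.1 q.1 < (a.2:ℝ) - (q.2:ℝ) := hab
    show Q.d a.1 q.1 < ((a.2 + δ : ℝ≥0):ℝ) - ((q.2 + δ : ℝ≥0):ℝ)
    push_cast
    linarith
  · rintro a ⟨q, hq, rfl⟩
    obtain ⟨b, hb, hqb⟩ := (c.2 n).2 q hq
    refine ⟨(b.1, b.2 + δ), ⟨b, hb, rfl⟩, ?_⟩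
    have hqb' : Q.d q.1 b.1 < (q.2:ℝ) - (b.2:ℝ) := hqb
    show Q.d q.1 b.1 < ((q.2 + δ : ℝ≥0):ℝ) - ((b.2 + δ : ℝ≥0):ℝ)
    push_cast
    linarith

lemma B2 {L : Set X} {cL : Q.Chain} (hL : Q.GR L cL) {δ : ℝ} (hδ : 0 < δ) {mδ : ℕ}
    (hmδ : ((mδ:ℝ)+1)⁻¹ < δ/2) :
    ∀ n, Q.em ((Q.fatten cL δ.toNNReal).1 n) (cL.1 mδ) := by
  intro n
  have hcoeδ : ((δ.toNNReal : ℝ≥0) : ℝ) = δ := Real.coe_toNNReal δ hδ.le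
  constructor
  · intro b hb
    obtain ⟨p, hp, hdp⟩ := (hL n).2.1 b.1 ((hL mδ).1 b hb).1
    refine ⟨(p.1, p.2 + δ.toNNReal), ⟨p, hp, rfl⟩, ?_⟩
    show Q.d p.1 b.1 < ((p.2 + δ.toNNReal : ℝ≥0):ℝ) - (b.2:ℝ)
    rw [NNReal.coe_add, hcoeδ, ((hL n).1 p hp).2, ((hL mδ).1 b hb).2]
    have har := ar2 n
    linarith
  · rintro a ⟨q, hq, rfl⟩
    obtain ⟨p, hp, hdp⟩ := (hL mδ).2.2 q.1 ((hL n).1 q hq).1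
    refine ⟨p, hp, ?_⟩
    show Q.d q.1 p.1 < ((q.2 + δ.toNNReal : ℝ≥0):ℝ) - (p.2:ℝ)
    rw [NNReal.coe_add, hcoeδ, ((hL n).1 q hq).2, ((hL mδ).1 p hp).2]
    have har := ar2 mδ
    have h2 : (0:ℝ) < ((n:ℝ)+1)⁻¹ := by positivity
    linarith

lemma B3 {C : ℝ} (hC : ∀ x y, Q.d x y ≤ C) {K L L' : Set X}
    (hKne : K.Nonempty) (hLne : L.Nonempty) (hL'ne : L'.Nonempty)
    {cL cL' : Q.Chain} (hL : Q.GR L cL) (hL' : Q.GR L' cL')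
    {ε δ : ℝ} (hδ : 0 < δ) (hHd : Q.Hd K L ≤ ε - 5*δ) {n₀ m' : ℕ}
    (hn₀ : ((n₀:ℝ)+1)⁻¹ < δ)
    (hem : Q.em ((Q.fatten cL δ.toNNReal).1 n₀) (cL'.1 m')) :
    Q.Hd K L' < ε := by
  have hcoeδ : ((δ.toNNReal : ℝ≥0) : ℝ) = δ := Real.coe_toNNReal δ hδ.le
  refine Q.Hd_lt hKne hL'ne (show ε - δ < ε by linarith) ?_ ?_
  · intro b' hb'
    obtain ⟨z, hz, hdz⟩ := (hL' m').2.1 b' hb'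
    obtain ⟨afat, hafat, hab⟩ := hem.1 z hz
    obtain ⟨q, hq, rfl⟩ := hafat
    have hq2 : (q.2:ℝ) = ((n₀:ℝ)+1)⁻¹ := ((hL n₀).1 q hq).2
    have hz2 : (z.2:ℝ) = ((m':ℝ)+1)⁻¹ := ((hL' m').1 z hz).2
    have hqL : q.1 ∈ L := ((hL n₀).1 q hq).1
    have h1 : Q.dSetPt K q.1 < ε - 4*δ :=
      lt_of_le_of_lt (Q.dSetPt_le_Hd hC hKne hqL) (by linarith)
    obtain ⟨a0, ha0, hda0⟩ := Q.exists_dSetPt_lt hKne h1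
    have hab' : Q.d q.1 z.1 < ((q.2 + δ.toNNReal : ℝ≥0):ℝ) - (z.2:ℝ) := hab
    rw [NNReal.coe_add, hcoeδ, hq2, hz2] at hab'
    have t1 := Q.triangle a0 q.1 b'
    have t2 := Q.triangle q.1 z.1 b'
    have har := ar2 m'
    refine le_trans (Q.dSetPt_le ha0) ?_
    linarith
  · intro a0 ha0
    have h2 : Q.dPtSet a0 L < ε - 4*δ :=
      lt_of_le_of_lt (Q.dPtSet_le_Hd hC hLne ha0) (by linarith)
    obtain ⟨y, hyL, hy⟩ := Q.exists_dPtSet_lt hLne h2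
    obtain ⟨q, hq, hdq⟩ := (hL n₀).2.2 y hyL
    obtain ⟨b, hb, hqb⟩ := hem.2 (q.1, q.2 + δ.toNNReal) ⟨q, hq, rfl⟩
    have hq2 : (q.2:ℝ) = ((n₀:ℝ)+1)⁻¹ := ((hL n₀).1 q hq).2
    have hb2 : (b.2:ℝ) = ((m':ℝ)+1)⁻¹ := ((hL' m').1 b hb).2
    have hbL' : b.1 ∈ L' := ((hL' m').1 b hb).1
    have hqb' : Q.d q.1 b.1 < ((q.2 + δ.toNNReal : ℝ≥0):ℝ) - (b.2:ℝ) := hqb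
    rw [NNReal.coe_add, hcoeδ, hq2, hb2] at hqb'
    have t1 := Q.triangle a0 y b.1
    have t2 := Q.triangle y q.1 b.1
    have har := ar2 n₀
    have hm'pos : (0:ℝ) ≤ ((m':ℝ)+1)⁻¹ := by positivity
    refine le_trans (Q.dPtSet_le hbL') ?_
    linarith

/-! #### Openness criteria -/

lemma isOpen_hd (U : Set Q.K0T)
    (h : ∀ K ∈ U, ∃ ε : ℝ, 0 < ε ∧ ∀ L : Q.K0T, Q.Hd K.1 L.1 < ε → L ∈ U) :
    @IsOpen _ Q.hdTop U := by
  letI := Q.hdTop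
  choose! ε hε hsub using h
  have hU : U = ⋃ K ∈ U, {L : Q.K0T | Q.Hd K.1 L.1 < ε K} := by
    ext L
    simp only [Set.mem_iUnion, Set.mem_setOf_eq]
    constructor
    · intro hL
      exact ⟨L, hL, Q.Hd_self_lt L.2.1 (hε L hL)⟩
    · rintro ⟨K, hK, hlt⟩
      exact hsub K hK L hlt
  rw [hU]
  exact isOpen_biUnion fun K hK => isOpen_generateFrom_of_mem ⟨K, ε K, hε K hK, rfl⟩

lemma isOpen_ind (φ : Q.K0T → Q.CBX) (U : Set Q.K0T)
    (h : ∀ K ∈ U, ∃ I : Q.CBX, Q.cbWB I (φ K) ∧ ∀ L, Q.cbWB I (φ L) → L ∈ U) :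
    @IsOpen _ (TopologicalSpace.induced φ Q.scottTop) U := by
  letI := TopologicalSpace.induced φ Q.scottTop
  choose I hI hsub using h
  have hU : U = ⋃ K, ⋃ (hK : K ∈ U), φ ⁻¹' {J | Q.cbWB (I K hK) J} := by
    ext L
    simp only [Set.mem_iUnion, Set.mem_preimage, Set.mem_setOf_eq]
    exact ⟨fun hL => ⟨L, hL, hI L hL⟩, fun ⟨K, hK, hlt⟩ => hsub K hK L hlt⟩
  rw [hU]
  refine isOpen_iUnion fun K => isOpen_iUnion fun hK => ?_
  exact (@isOpen_induced_iff _ _ Q.scottTop _ φ).mpr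
    ⟨{J | Q.cbWB (I K hK) J}, isOpen_generateFrom_of_mem ⟨I K hK, rfl⟩, rfl⟩

end QuasiMetric

/-- if moreover every compact subset of `(X, τ_d)` is `d⁻¹`-precompact, then
`φ(K) = K*` is a topological embedding of `(K_0(X), H_d)` into `(CBX, σ)`. -/
theorem stmt10 {X : Type} (Q : QuasiMetric X) (hT1 : Q.IsT1) (hB : Q.Bounded)
    (hY : Q.SeqYonedaComplete)
    (hpre : ∀ K : Set X, @IsCompact X Q.tau K → Q.dInvPrecompact K)
    (φ : Q.K0T → Q.CBX)
    (hφ : ∀ (K : Q.K0T) (c : Q.Chain), Q.IsStdRep K.1 c →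
      φ K = Quotient.mk Q.chainSetoid c) :
    Function.Injective φ ∧ (@Continuous _ _ Q.hdTop Q.scottTop φ) ∧
      Q.hdTop = TopologicalSpace.induced φ Q.scottTop := by
  classical
  obtain ⟨C, hC⟩ := hB
  have hrep : ∀ K : Q.K0T, ∃ c : Q.Chain, Q.IsStdRep K.1 c ∧ Q.GR K.1 c :=
    fun K => Q.exists_goodRep K.2.1 K.2.2 (hpre K.1 K.2.2)
  choose rep hstd hgr using hrep
  have hφr : ∀ K, φ K = Quotient.mk Q.chainSetoid (rep K) := fun K => hφ K (rep K) (hstd K)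
  -- Injectivity
  have hinj : Function.Injective φ := by
    intro K L h
    have heq : Quotient.mk Q.chainSetoid (rep K) = Quotient.mk Q.chainSetoid (rep L) := by
      rw [← hφr K, ← hφr L]
      exact h
    have h2 : Q.chainEquiv (rep K) (rep L) := Quotient.exact heq
    exact Subtype.ext (Set.Subset.antisymm
      (Q.subset_of_chainLE hT1 L.2.2 (hgr L) (hgr K) h2.2)
      (Q.subset_of_chainLE hT1 K.2.2 (hgr K) (hgr L) h2.1))
  -- Scott-basic preimages are H_d-open
  have hA : ∀ I : Q.CBX, @IsOpen _ Q.hdTop (φ ⁻¹' {J | Q.cbWB I J}) := by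
    intro I
    apply Q.isOpen_hd
    intro K hK
    have hKw : Q.chainWB (Quotient.out I) (rep K) := by
      have h0 : Q.cbWB I (φ K) := hK
      rw [hφr K, ← Quotient.out_eq I] at h0
      exact h0
    obtain ⟨m, hm⟩ := hKw
    refine ⟨(4*((m:ℝ)+1))⁻¹, by positivity, ?_⟩
    intro L hLd
    show Q.cbWB I (φ L)
    rw [hφr L, ← Quotient.out_eq I]
    exact (⟨8*m+8, Q.A_core hC K.2.1 L.2.1 (hgr K) (hgr L) hm hLd⟩ :
      Q.chainWB (Quotient.out I) (rep L))
  -- H_d-balls are induced-open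
  have hBpart : ∀ (K : Q.K0T) (ε : ℝ), 0 < ε →
      @IsOpen _ (TopologicalSpace.induced φ Q.scottTop) {L : Q.K0T | Q.Hd K.1 L.1 < ε} := by
    intro K ε hε
    apply Q.isOpen_ind
    intro L0 hL0
    have hL0' : Q.Hd K.1 L0.1 < ε := hL0
    set δ := (ε - Q.Hd K.1 L0.1)/5 with hδdef
    have hδ : 0 < δ := by rw [hδdef]; linarith
    obtain ⟨mδ, hmδ⟩ := QuasiMetric.exists_inv_lt (show (0:ℝ) < δ/2 by linarith)
    refine ⟨Quotient.mk Q.chainSetoid (Q.fatten (rep L0) δ.toNNReal), ?_, ?_⟩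
    · rw [hφr L0]
      exact (⟨mδ, Q.B2 (hgr L0) hδ hmδ⟩ :
        Q.chainWB (Q.fatten (rep L0) δ.toNNReal) (rep L0))
    · intro L' hL'
      rw [hφr L'] at hL'
      have hw : Q.chainWB (Q.fatten (rep L0) δ.toNNReal) (rep L') := hL'
      obtain ⟨m', hm'⟩ := hw
      obtain ⟨n₀, hn₀⟩ := QuasiMetric.exists_inv_lt hδ
      show Q.Hd K.1 L'.1 < ε
      refine Q.B3 hC K.2.1 L0.2.1 L'.2.1 (hgr L0) (hgr L') hδ ?_ hn₀ (hm' n₀)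
      have heq5 : ε - 5*δ = Q.Hd K.1 L0.1 := by
        rw [hδdef]
        ring
      rw [heq5]
  -- topology equality
  have htop : Q.hdTop = TopologicalSpace.induced φ Q.scottTop := by
    apply le_antisymm
    · rw [show TopologicalSpace.induced φ Q.scottTop =
          TopologicalSpace.generateFrom
            (Set.preimage φ '' {s | ∃ I : Q.CBX, s = {J | Q.cbWB I J}}) from
        induced_generateFrom_eq]
      refine @le_generateFrom _ Q.hdTop _ ?_
      rintro s ⟨u, ⟨I, rfl⟩, rfl⟩
      exact hA I
    · refine @le_generateFrom _ (TopologicalSpace.induced φ Q.scottTop) _ ?_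
      rintro s ⟨K, ε, hε, rfl⟩
      exact hBpart K ε hε
  exact ⟨hinj, (@continuous_iff_le_induced _ _ φ Q.hdTop Q.scottTop).mpr (le_of_eq htop), htop⟩
end

section
/- Let (X,d) be a quasi-metric space and let G, H, M, L ∈ P_fin(BX). Suppose G ≺ H; suppose H ⊑_{EM} M, meaning every a ∈ H has some b ∈ M with a ⊑ b and every b ∈ M has some a ∈ H with a ⊑ b; and suppose H_q(M, L) < δ(G,H), where δ(G,H) = min{(r − s) − d(x,y) : (x,r) ∈ G, (y,s) ∈ H, (x,r) ≺ (y,s)}. Then G ≺ L. -/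
open scoped NNReal

lemma QuasiMetric.aux_delta_le {X : Type} (Q : QuasiMetric X) (G H : PFin X) {a b : FB X}
    (ha : a ∈ G.1) (hb : b ∈ H.1) (hab : Q.blt a b) :
    Q.delta G H ≤ ((a.2 : ℝ) - (b.2 : ℝ)) - Q.d a.1 b.1 := by
  apply csInf_le
  · apply Set.Finite.bddBelow
    have hsub : {t | ∃ a ∈ G.1, ∃ b ∈ H.1, Q.blt a b ∧ t = ((a.2:ℝ) - (b.2:ℝ)) - Q.d a.1 b.1}
        ⊆ (fun p : FB X × FB X => ((p.1.2:ℝ) - (p.2.2:ℝ)) - Q.d p.1.1 p.2.1) '' (G.1 ×ˢ H.1) := by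
      rintro t ⟨a, ha, b, hb, _, rfl⟩
      exact ⟨(a, b), ⟨ha, hb⟩, rfl⟩
    exact Set.Finite.subset ((G.2.1.prod H.2.1).image _) hsub
  · exact ⟨a, ha, b, hb, hab, rfl⟩

lemma QuasiMetric.aux_key {X : Type} (Q : QuasiMetric X) {a b m l : FB X}
    (hab : Q.blt a b) (hbm : Q.ble b m)
    (hδ : Q.q m l < ((a.2:ℝ) - (b.2:ℝ)) - Q.d a.1 b.1) : Q.blt a l := by
  unfold QuasiMetric.blt QuasiMetric.ble QuasiMetric.q at *
  have h1 : Q.d m.1 l.1 ≤ max (Q.d m.1 l.1) |(m.2:ℝ) - (l.2:ℝ)| := le_max_left _ _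
  have h2 : Q.d a.1 l.1 ≤ Q.d a.1 m.1 + Q.d m.1 l.1 := Q.triangle _ _ _
  have h3 : Q.d a.1 m.1 ≤ Q.d a.1 b.1 + Q.d b.1 m.1 := Q.triangle _ _ _
  linarith

lemma QuasiMetric.aux_hq {X : Type} (Q : QuasiMetric X) (M L : PFin X) {c : ℝ}
    (hq : Q.Hq M L < c) :
    (∀ m ∈ M.1, ∃ l ∈ L.1, Q.q m l < c) ∧ (∀ l ∈ L.1, ∃ m ∈ M.1, Q.q m l < c) := by
  rw [QuasiMetric.Hq, max_lt_iff] at hq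
  obtain ⟨h1, h2⟩ := hq
  constructor
  · intro m hm
    have hfin : {s | ∃ b ∈ L.1, s = Q.q m b}.Finite := by
      refine Set.Finite.subset (L.2.1.image (fun b => Q.q m b)) ?_
      rintro s ⟨b, hb, rfl⟩; exact ⟨b, hb, rfl⟩
    have hne : {s | ∃ b ∈ L.1, s = Q.q m b}.Nonempty := by
      obtain ⟨b, hb⟩ := L.2.2; exact ⟨Q.q m b, b, hb, rfl⟩
    have hlt : sInf {s | ∃ b ∈ L.1, s = Q.q m b} < c := by
      refine lt_of_le_of_lt (le_csSup ?_ ?_) h1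
      · apply Set.Finite.bddAbove
        refine Set.Finite.subset (M.2.1.image
          (fun a => sInf {s | ∃ b ∈ L.1, s = Q.q a b})) ?_
        rintro s ⟨a, ha, rfl⟩; exact ⟨a, ha, rfl⟩
      · exact ⟨m, hm, rfl⟩
    obtain ⟨b, hb, heq⟩ := hne.csInf_mem hfin
    exact ⟨b, hb, heq ▸ hlt⟩
  · intro l hl
    have hfin : {s | ∃ a ∈ M.1, s = Q.q a l}.Finite := by
      refine Set.Finite.subset (M.2.1.image (fun a => Q.q a l)) ?_
      rintro s ⟨a, ha, rfl⟩; exact ⟨a, ha, rfl⟩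
    have hne : {s | ∃ a ∈ M.1, s = Q.q a l}.Nonempty := by
      obtain ⟨a, ha⟩ := M.2.2; exact ⟨Q.q a l, a, ha, rfl⟩
    have hlt : sInf {s | ∃ a ∈ M.1, s = Q.q a l} < c := by
      refine lt_of_le_of_lt (le_csSup ?_ ?_) h2
      · apply Set.Finite.bddAbove
        refine Set.Finite.subset (L.2.1.image
          (fun b => sInf {s | ∃ a ∈ M.1, s = Q.q a b})) ?_
        rintro s ⟨b, hb, rfl⟩; exact ⟨b, hb, rfl⟩
      · exact ⟨l, hl, rfl⟩
    obtain ⟨a, ha, heq⟩ := hne.csInf_mem hfin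
    exact ⟨a, ha, heq ▸ hlt⟩

/-- Lemma 5.12 of the paper: `G ≺ H ⊑ M` and `H_q(M,L) < δ(G,H)` imply
`G ≺ L`. -/
theorem stmt11 {X : Type} (Q : QuasiMetric X) (G H M L : PFin X)
    (hGH : Q.em G H) (hHM : Q.emLE H M) (hq : Q.Hq M L < Q.delta G H) :
    Q.em G L := by
  obtain ⟨hq1, hq2⟩ := Q.aux_hq M L hq
  constructor
  · intro l hl
    obtain ⟨m, hm, hml⟩ := hq2 l hl
    obtain ⟨b, hb, hbm⟩ := hHM.2 m hm
    obtain ⟨a, ha, hab⟩ := hGH.1 b hb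
    have hδ := Q.aux_delta_le G H ha hb hab
    exact ⟨a, ha, Q.aux_key hab hbm (lt_of_lt_of_le hml hδ)⟩
  · intro a ha
    obtain ⟨b, hb, hab⟩ := hGH.2 a ha
    obtain ⟨m, hm, hbm⟩ := hHM.1 b hb
    obtain ⟨l, hl, hml⟩ := hq1 m hm
    have hδ := Q.aux_delta_le G H ha hb hab
    exact ⟨l, hl, Q.aux_key hab hbm (lt_of_lt_of_le hml hδ)⟩
end

section
/- Let (X,d) be a sequentially Yoneda-complete T1 bounded quasi-metric space. If (F_n) and (F'_k) are ∼-equivalent ω-chains in P_fin(BX), and (G_m) and (G'_l) are ∼-equivalent ω-chains in P_fin(BX), then sup_n inf_m H_q(F_n, G_m) = sup_k inf_l H_q(F'_k, G'_l). Consequently the function D(I,J) = sup_n inf_m H_q(F_n, G_m) is well-defined on CBX, independent of the chosen representations of I and J. -/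
open scoped NNReal

/-! Auxiliary lemmas for statement 13. -/

lemma setOf_eq_image' {α β : Type _} (s : Set α) (f : α → β) :
    {t | ∃ a ∈ s, t = f a} = f '' s := by
  ext t
  constructor
  · rintro ⟨a, ha, rfl⟩; exact ⟨a, ha, rfl⟩
  · rintro ⟨a, ha, rfl⟩; exact ⟨a, ha, rfl⟩

namespace QuasiMetric

variable {X : Type} (Q : QuasiMetric X)

lemma q_nonneg (a b : FB X) : 0 ≤ Q.q a b := by
  unfold q
  have h1 : |(a.2 : ℝ) - b.2| ≤ max (Q.d a.1 b.1) |(a.2 : ℝ) - b.2| := le_max_right _ _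
  have h2 := le_abs_self ((a.2 : ℝ) - b.2)
  linarith

lemma q_triangle (a b c : FB X) : Q.q a c ≤ Q.q a b + Q.q b c := by
  unfold q
  have hd := Q.triangle a.1 b.1 c.1
  have habs : |(a.2 : ℝ) - c.2| ≤ |(a.2 : ℝ) - b.2| + |(b.2 : ℝ) - c.2| := by
    have := abs_sub_le ((a.2 : ℝ)) ((b.2 : ℝ)) ((c.2 : ℝ)); simpa using this
  have hmax : max (Q.d a.1 c.1) |(a.2 : ℝ) - c.2| ≤
      max (Q.d a.1 b.1) |(a.2 : ℝ) - b.2| + max (Q.d b.1 c.1) |(b.2 : ℝ) - c.2| := by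
    apply max_le
    · exact le_trans hd (add_le_add (le_max_left _ _) (le_max_left _ _))
    · exact le_trans habs (add_le_add (le_max_right _ _) (le_max_right _ _))
  linarith

lemma q_eq_zero_of_blt {a b : FB X} (h : Q.blt a b) : Q.q a b = 0 := by
  unfold blt at h
  have hd0 := Q.nonneg a.1 b.1
  have habs : |(a.2 : ℝ) - b.2| = (a.2 : ℝ) - b.2 := abs_of_nonneg (by linarith)
  unfold q
  rw [habs, max_eq_right (le_of_lt h)]
  ring

/-- The set of `q`-distances from `a` to elements of `G`. -/
lemma qset_fin (G : PFin X) (a : FB X) : {s | ∃ b ∈ G.1, s = Q.q a b}.Finite := by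
  rw [setOf_eq_image']
  exact G.2.1.image _

lemma qset_fin' (F : PFin X) (b : FB X) : {s | ∃ a ∈ F.1, s = Q.q a b}.Finite := by
  rw [setOf_eq_image' F.1 (fun a => Q.q a b)]
  exact F.2.1.image _

lemma qset_ne (G : PFin X) (a : FB X) : {s | ∃ b ∈ G.1, s = Q.q a b}.Nonempty := by
  obtain ⟨b, hb⟩ := G.2.2
  exact ⟨Q.q a b, b, hb, rfl⟩

lemma qset_ne' (F : PFin X) (b : FB X) : {s | ∃ a ∈ F.1, s = Q.q a b}.Nonempty := by
  obtain ⟨a, ha⟩ := F.2.2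
  exact ⟨Q.q a b, a, ha, rfl⟩

lemma qset_bddBelow (G : PFin X) (a : FB X) : BddBelow {s | ∃ b ∈ G.1, s = Q.q a b} :=
  ⟨0, by rintro s ⟨b, hb, rfl⟩; exact Q.q_nonneg a b⟩

lemma qset_bddBelow' (F : PFin X) (b : FB X) : BddBelow {s | ∃ a ∈ F.1, s = Q.q a b} :=
  ⟨0, by rintro s ⟨a, ha, rfl⟩; exact Q.q_nonneg a b⟩

lemma infq_nonneg (G : PFin X) (a : FB X) : 0 ≤ sInf {s | ∃ b ∈ G.1, s = Q.q a b} :=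
  le_csInf (Q.qset_ne G a) (by rintro s ⟨b, hb, rfl⟩; exact Q.q_nonneg a b)

lemma infq_nonneg' (F : PFin X) (b : FB X) : 0 ≤ sInf {s | ∃ a ∈ F.1, s = Q.q a b} :=
  le_csInf (Q.qset_ne' F b) (by rintro s ⟨a, ha, rfl⟩; exact Q.q_nonneg a b)

lemma Hq_nonneg (F G : PFin X) : 0 ≤ Q.Hq F G := by
  unfold Hq
  refine le_trans ?_ (le_max_left _ _)
  apply Real.sSup_nonneg
  rintro t ⟨a, ha, rfl⟩
  exact Q.infq_nonneg G a

/-- Key monotonicity: if `F ≺ F'` and `G' ≺ G` then `H_q(F,G) ≤ H_q(F',G')`. -/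
lemma Hq_le_of_em {F F' G G' : PFin X} (hF : Q.em F F') (hG : Q.em G' G) :
    Q.Hq F G ≤ Q.Hq F' G' := by
  have hcomp1 :
      sSup {t | ∃ a' ∈ F'.1, t = sInf {s | ∃ b' ∈ G'.1, s = Q.q a' b'}} ≤ Q.Hq F' G' :=
    le_max_left _ _
  have hcomp2 :
      sSup {t | ∃ b' ∈ G'.1, t = sInf {s | ∃ a' ∈ F'.1, s = Q.q a' b'}} ≤ Q.Hq F' G' :=
    le_max_right _ _
  unfold Hq
  apply max_le
  · apply csSup_le
    · obtain ⟨a, ha⟩ := F.2.2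
      exact ⟨_, a, ha, rfl⟩
    rintro t ⟨a, ha, rfl⟩
    obtain ⟨a', ha', haa'⟩ := hF.2 a ha
    -- the inf over G' is attained
    have hmem : sInf {s | ∃ b' ∈ G'.1, s = Q.q a' b'} ∈ {s | ∃ b' ∈ G'.1, s = Q.q a' b'} :=
      (Q.qset_ne G' a').csInf_mem (Q.qset_fin G' a')
    simp only [Set.mem_setOf_eq] at hmem
    obtain ⟨b', hb', hs0⟩ := hmem
    obtain ⟨b, hb, hb'b⟩ := hG.2 b' hb'
    have h1 : sInf {s | ∃ b ∈ G.1, s = Q.q a b} ≤ Q.q a b :=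
      csInf_le (Q.qset_bddBelow G a) ⟨b, hb, rfl⟩
    have h2 : Q.q a b ≤ Q.q a a' + Q.q a' b' + Q.q b' b := by
      have t1 := Q.q_triangle a a' b
      have t2 := Q.q_triangle a' b' b
      linarith
    rw [Q.q_eq_zero_of_blt haa', Q.q_eq_zero_of_blt hb'b] at h2
    have h3 : sInf {s | ∃ b' ∈ G'.1, s = Q.q a' b'} ≤ Q.Hq F' G' := by
      have hmem2 : sInf {s | ∃ b' ∈ G'.1, s = Q.q a' b'} ∈
          {t | ∃ a'' ∈ F'.1, t = sInf {s | ∃ b' ∈ G'.1, s = Q.q a'' b'}} := ⟨a', ha', rfl⟩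
      have hbdd : BddAbove {t | ∃ a'' ∈ F'.1, t = sInf {s | ∃ b' ∈ G'.1, s = Q.q a'' b'}} := by
        rw [setOf_eq_image' F'.1 (fun a'' => sInf {s | ∃ b' ∈ G'.1, s = Q.q a'' b'})]
        exact (F'.2.1.image _).bddAbove
      exact le_trans (le_csSup hbdd hmem2) hcomp1
    calc sInf {s | ∃ b ∈ G.1, s = Q.q a b} ≤ Q.q a b := h1
      _ ≤ Q.q a' b' := by linarith
      _ = sInf {s | ∃ b' ∈ G'.1, s = Q.q a' b'} := hs0.symm
      _ ≤ Q.Hq F' G' := h3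
  · apply csSup_le
    · obtain ⟨b, hb⟩ := G.2.2
      exact ⟨_, b, hb, rfl⟩
    rintro t ⟨b, hb, rfl⟩
    obtain ⟨b', hb', hb'b⟩ := hG.1 b hb
    have hmem : sInf {s | ∃ a' ∈ F'.1, s = Q.q a' b'} ∈ {s | ∃ a' ∈ F'.1, s = Q.q a' b'} :=
      (Q.qset_ne' F' b').csInf_mem (Q.qset_fin' F' b')
    simp only [Set.mem_setOf_eq] at hmem
    obtain ⟨a', ha', hs0⟩ := hmem
    obtain ⟨a, ha, haa'⟩ := hF.1 a' ha'
    have h1 : sInf {s | ∃ a ∈ F.1, s = Q.q a b} ≤ Q.q a b :=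
      csInf_le (Q.qset_bddBelow' F b) ⟨a, ha, rfl⟩
    have h2 : Q.q a b ≤ Q.q a a' + Q.q a' b' + Q.q b' b := by
      have t1 := Q.q_triangle a a' b
      have t2 := Q.q_triangle a' b' b
      linarith
    rw [Q.q_eq_zero_of_blt haa', Q.q_eq_zero_of_blt hb'b] at h2
    have h3 : sInf {s | ∃ a' ∈ F'.1, s = Q.q a' b'} ≤ Q.Hq F' G' := by
      have hmem2 : sInf {s | ∃ a' ∈ F'.1, s = Q.q a' b'} ∈
          {t | ∃ b'' ∈ G'.1, t = sInf {s | ∃ a' ∈ F'.1, s = Q.q a' b''}} := ⟨b', hb', rfl⟩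
      have hbdd : BddAbove {t | ∃ b'' ∈ G'.1, t = sInf {s | ∃ a' ∈ F'.1, s = Q.q a' b''}} := by
        rw [setOf_eq_image' G'.1 (fun b'' => sInf {s | ∃ a' ∈ F'.1, s = Q.q a' b''})]
        exact (G'.2.1.image _).bddAbove
      exact le_trans (le_csSup hbdd hmem2) hcomp2
    calc sInf {s | ∃ a ∈ F.1, s = Q.q a b} ≤ Q.q a b := h1
      _ ≤ Q.q a' b' := by linarith
      _ = sInf {s | ∃ a' ∈ F'.1, s = Q.q a' b'} := hs0.symm
      _ ≤ Q.Hq F' G' := h3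

lemma le_rF {F : PFin X} {p : FB X} (hp : p ∈ F.1) : (p.2 : ℝ) ≤ rF F := by
  refine le_csSup ?_ ⟨p, hp, rfl⟩
  rw [setOf_eq_image' F.1 (fun p => (p.2 : ℝ))]
  exact (F.2.1.image _).bddAbove

lemma rF_nonneg (F : PFin X) : 0 ≤ rF F := by
  obtain ⟨p, hp⟩ := F.2.2
  exact le_trans p.2.2 (le_rF (X := X) hp)

/-- In a chain, all radii are bounded by the radii of the first set. -/
lemma radius_le (c : Q.Chain) : ∀ n, ∀ p ∈ (c.1 n).1, (p.2 : ℝ) ≤ rF (c.1 0) := by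
  intro n
  induction n with
  | zero => intro p hp; exact le_rF hp
  | succ n ih =>
    intro p hp
    obtain ⟨a, ha, hab⟩ := (c.2 n).1 p hp
    have hd0 := Q.nonneg a.1 p.1
    have : (p.2 : ℝ) ≤ (a.2 : ℝ) := by
      have := hab; unfold blt at this; linarith
    exact le_trans this (ih a ha)

lemma q_le_bound {C R : ℝ} (hC : ∀ x y, Q.d x y ≤ C) (hR : 0 ≤ R) {a b : FB X}
    (ha : (a.2 : ℝ) ≤ R) (hb : (b.2 : ℝ) ≤ R) : Q.q a b ≤ max C R + R := by
  have ha0 : (0 : ℝ) ≤ (a.2 : ℝ) := a.2.2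
  have hb0 : (0 : ℝ) ≤ (b.2 : ℝ) := b.2.2
  have habs : |(a.2 : ℝ) - b.2| ≤ R := abs_le.mpr ⟨by linarith, by linarith⟩
  have hmax : max (Q.d a.1 b.1) |(a.2 : ℝ) - b.2| ≤ max C R :=
    max_le_max (hC a.1 b.1) habs
  unfold q
  have : (b.2 : ℝ) - a.2 ≤ R := by linarith
  linarith

lemma Hq_le_bound {C R : ℝ} (hC : ∀ x y, Q.d x y ≤ C) (hR : 0 ≤ R) {F G : PFin X}
    (hF : ∀ p ∈ F.1, (p.2 : ℝ) ≤ R) (hG : ∀ p ∈ G.1, (p.2 : ℝ) ≤ R) :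
    Q.Hq F G ≤ max C R + R := by
  unfold Hq
  apply max_le
  · apply csSup_le
    · obtain ⟨a, ha⟩ := F.2.2; exact ⟨_, a, ha, rfl⟩
    rintro t ⟨a, ha, rfl⟩
    obtain ⟨b, hb⟩ := G.2.2
    refine le_trans (csInf_le (Q.qset_bddBelow G a) ⟨b, hb, rfl⟩) ?_
    exact Q.q_le_bound hC hR (hF a ha) (hG b hb)
  · apply csSup_le
    · obtain ⟨b, hb⟩ := G.2.2; exact ⟨_, b, hb, rfl⟩
    rintro t ⟨b, hb, rfl⟩
    obtain ⟨a, ha⟩ := F.2.2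
    refine le_trans (csInf_le (Q.qset_bddBelow' F b) ⟨a, ha, rfl⟩) ?_
    exact Q.q_le_bound hC hR (hF a ha) (hG b hb)

lemma hqset_bddBelow (c g : Q.Chain) (n : ℕ) :
    BddBelow {s | ∃ m, s = Q.Hq (c.1 n) (g.1 m)} :=
  ⟨0, by rintro s ⟨m, rfl⟩; exact Q.Hq_nonneg _ _⟩

lemma Dchain_le_Dchain (hB : Q.Bounded) {c c' g g' : Q.Chain}
    (h1 : Q.chainLE c c') (h2 : Q.chainLE g' g) :
    Q.Dchain c g ≤ Q.Dchain c' g' := by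
  obtain ⟨C, hC⟩ := hB
  set R : ℝ := max (rF (c'.1 0)) (rF (g'.1 0)) with hR
  have hR0 : 0 ≤ R := le_trans (rF_nonneg (c'.1 0)) (le_max_left _ _)
  set B : ℝ := max C R + R with hBdef
  have hbound : ∀ k l, Q.Hq (c'.1 k) (g'.1 l) ≤ B := by
    intro k l
    refine Q.Hq_le_bound hC hR0 ?_ ?_
    · intro p hp
      exact le_trans (Q.radius_le c' k p hp) (le_max_left _ _)
    · intro p hp
      exact le_trans (Q.radius_le g' l p hp) (le_max_right _ _)
  have hbddS' : BddAbove {t | ∃ k, t = sInf {s | ∃ l, s = Q.Hq (c'.1 k) (g'.1 l)}} := by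
    refine ⟨B, ?_⟩
    rintro t ⟨k, rfl⟩
    exact le_trans (csInf_le (Q.hqset_bddBelow c' g' k) ⟨0, rfl⟩) (hbound k 0)
  have hDnn : 0 ≤ Q.Dchain c' g' := by
    refine le_trans ?_ (le_csSup hbddS' ⟨0, rfl⟩)
    exact le_csInf ⟨_, 0, rfl⟩ (by rintro s ⟨l, rfl⟩; exact Q.Hq_nonneg _ _)
  unfold Dchain
  apply Real.sSup_le _ hDnn
  rintro t ⟨n, rfl⟩
  obtain ⟨k, hk⟩ := h1 n
  have step : sInf {s | ∃ m, s = Q.Hq (c.1 n) (g.1 m)} ≤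
      sInf {s | ∃ l, s = Q.Hq (c'.1 k) (g'.1 l)} := by
    refine le_csInf ⟨_, 0, rfl⟩ ?_
    rintro s ⟨l, rfl⟩
    obtain ⟨m, hm⟩ := h2 l
    exact le_trans (csInf_le (Q.hqset_bddBelow c g n) ⟨m, rfl⟩) (Q.Hq_le_of_em hk hm)
  exact le_trans step (le_csSup hbddS' ⟨k, rfl⟩)

lemma Dchain_congr (hB : Q.Bounded) {c c' g g' : Q.Chain}
    (hc : Q.chainEquiv c c') (hg : Q.chainEquiv g g') :
    Q.Dchain c g = Q.Dchain c' g' :=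
  le_antisymm (Q.Dchain_le_Dchain hB hc.1 hg.2) (Q.Dchain_le_Dchain hB hc.2 hg.1)

end QuasiMetric

/-- `D` is independent of the chosen representations, hence well-defined on
`CBX`. -/
theorem stmt13 {X : Type} (Q : QuasiMetric X) (hT1 : Q.IsT1) (hB : Q.Bounded)
    (hY : Q.SeqYonedaComplete) :
    (∀ c c' g g' : Q.Chain, Q.chainEquiv c c' → Q.chainEquiv g g' →
      Q.Dchain c g = Q.Dchain c' g') ∧
    (∀ (I J : Q.CBX) (c g : Q.Chain), Quotient.mk Q.chainSetoid c = I →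
      Quotient.mk Q.chainSetoid g = J → Q.Dchain c g = Q.D I J) := by
  constructor
  · intro c c' g g' hc hg
    exact Q.Dchain_congr hB hc hg
  · intro I J c g hc hg
    have hc' : Q.chainEquiv c (Quotient.out I) :=
      Quotient.exact (hc.trans (Quotient.out_eq I).symm)
    have hg' : Q.chainEquiv g (Quotient.out J) :=
      Quotient.exact (hg.trans (Quotient.out_eq J).symm)
    exact Q.Dchain_congr hB hc' hg'
end

section
/- Let (X,d) be a sequentially Yoneda-complete T1 bounded quasi-metric space. Then (CBX, D) is sequentially Yoneda-complete: every D-Cauchy sequence in CBX has a Yoneda limit with respect to D. -/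
open scoped NNReal

/-! ### Auxiliary lemmas for statement 15 -/

namespace Stmt15Aux

open QuasiMetric

lemma img_eq {α : Type _} (S : Set α) (f : α → ℝ) :
    {s | ∃ b ∈ S, s = f b} = f '' S := by
  ext t; simp [eq_comm, Set.mem_image]

lemma img_fin {α : Type _} {S : Set α} (hS : S.Finite) (f : α → ℝ) :
    {s | ∃ b ∈ S, s = f b}.Finite := by
  rw [img_eq]; exact hS.image f

lemma img_ne {α : Type _} {S : Set α} (hS : S.Nonempty) (f : α → ℝ) :
    {s | ∃ b ∈ S, s = f b}.Nonempty := by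
  obtain ⟨b, hb⟩ := hS; exact ⟨f b, b, hb, rfl⟩

variable {X : Type _} (Q : QuasiMetric X)

lemma q_nonneg (a b : FB X) : 0 ≤ Q.q a b := by
  unfold QuasiMetric.q
  have h1 : ((a.2 : ℝ) - b.2) ≤ |(a.2 : ℝ) - b.2| := le_abs_self _
  have h2 : |(a.2 : ℝ) - b.2| ≤ max (Q.d a.1 b.1) |(a.2 : ℝ) - b.2| := le_max_right _ _
  linarith

lemma q_triangle (a b c : FB X) : Q.q a c ≤ Q.q a b + Q.q b c := by
  unfold QuasiMetric.q
  have hd : Q.d a.1 c.1 ≤ Q.d a.1 b.1 + Q.d b.1 c.1 := Q.triangle _ _ _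
  have habs : |(a.2 : ℝ) - c.2| ≤ |(a.2 : ℝ) - b.2| + |(b.2 : ℝ) - c.2| := abs_sub_le _ _ _
  have h1 : Q.d a.1 c.1 ≤ max (Q.d a.1 b.1) |(a.2 : ℝ) - b.2| + max (Q.d b.1 c.1) |(b.2 : ℝ) - c.2| :=
    le_trans hd (add_le_add (le_max_left _ _) (le_max_left _ _))
  have h2 : |(a.2 : ℝ) - c.2| ≤ max (Q.d a.1 b.1) |(a.2 : ℝ) - b.2| + max (Q.d b.1 c.1) |(b.2 : ℝ) - c.2| :=
    le_trans habs (add_le_add (le_max_right _ _) (le_max_right _ _))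
  have := max_le h1 h2
  linarith

lemma q_zero_of_blt {a b : FB X} (h : Q.blt a b) : Q.q a b = 0 := by
  unfold QuasiMetric.blt at h
  have hd := Q.nonneg a.1 b.1
  unfold QuasiMetric.q
  rw [abs_of_nonneg (by linarith : (0:ℝ) ≤ (a.2 : ℝ) - b.2), max_eq_right (le_of_lt h)]
  ring

lemma q_le_bound {C : ℝ} (hC : ∀ x y, Q.d x y ≤ C) (a b : FB X) :
    Q.q a b ≤ C + 2 * (b.2 : ℝ) := by
  have hd := Q.nonneg a.1 b.1
  have hdc := hC a.1 b.1
  have ha : (0:ℝ) ≤ (a.2 : ℝ) := a.2.coe_nonneg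
  have hb : (0:ℝ) ≤ (b.2 : ℝ) := b.2.coe_nonneg
  unfold QuasiMetric.q
  rcases le_total ((a.2 : ℝ)) ((b.2 : ℝ)) with h | h
  · rw [abs_of_nonpos (by linarith)]
    have : max (Q.d a.1 b.1) (-((a.2 : ℝ) - b.2)) ≤ C + ((b.2:ℝ) - a.2) :=
      max_le (by linarith) (by linarith)
    linarith
  · rw [abs_of_nonneg (by linarith)]
    have : max (Q.d a.1 b.1) ((a.2 : ℝ) - b.2) ≤ Q.d a.1 b.1 + ((a.2:ℝ) - b.2) :=
      max_le (by linarith) (by linarith)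
    linarith

lemma q_shift_right (a b : FB X) (δ : ℝ≥0) :
    Q.q a (b.1, b.2 + δ) ≤ Q.q a b + 2 * (δ : ℝ) := by
  unfold QuasiMetric.q
  simp only [NNReal.coe_add]
  have h2 : |(b.2:ℝ) - ((b.2:ℝ) + δ)| = (δ : ℝ) := by
    rw [show (b.2:ℝ) - ((b.2:ℝ) + δ) = -(δ:ℝ) by ring, abs_neg, abs_of_nonneg δ.coe_nonneg]
  have h1 : |(a.2 : ℝ) - ((b.2 : ℝ) + δ)| ≤ |(a.2 : ℝ) - b.2| + (δ:ℝ) := by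
    have := abs_sub_le ((a.2:ℝ)) ((b.2:ℝ)) (((b.2:ℝ)) + δ)
    rw [h2] at this; exact this
  have hm : max (Q.d a.1 b.1) |(a.2 : ℝ) - ((b.2:ℝ) + δ)| ≤
      max (Q.d a.1 b.1) |(a.2 : ℝ) - b.2| + (δ:ℝ) := by
    have hδ : (0:ℝ) ≤ δ := δ.coe_nonneg
    exact max_le (by have := le_max_left (Q.d a.1 b.1) |(a.2 : ℝ) - b.2|; linarith)
      (by have := le_max_right (Q.d a.1 b.1) |(a.2 : ℝ) - b.2|; linarith)
  linarith

lemma q_shift_left (a b : FB X) (δ : ℝ≥0) :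
    Q.q (a.1, a.2 + δ) b ≤ Q.q a b := by
  unfold QuasiMetric.q
  simp only [NNReal.coe_add]
  have h2 : |((a.2:ℝ) + δ) - (a.2:ℝ)| = (δ : ℝ) := by
    rw [show ((a.2:ℝ) + δ) - (a.2:ℝ) = (δ:ℝ) by ring, abs_of_nonneg δ.coe_nonneg]
  have h1 : |((a.2 : ℝ) + δ) - (b.2:ℝ)| ≤ |(a.2 : ℝ) - b.2| + (δ:ℝ) := by
    have := abs_sub_le (((a.2:ℝ)) + δ) ((a.2:ℝ)) ((b.2:ℝ))
    rw [h2] at this; linarith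
  have hm : max (Q.d a.1 b.1) |((a.2 : ℝ) + δ) - (b.2:ℝ)| ≤
      max (Q.d a.1 b.1) |(a.2 : ℝ) - b.2| + (δ:ℝ) := by
    have hδ : (0:ℝ) ≤ δ := δ.coe_nonneg
    exact max_le (by have := le_max_left (Q.d a.1 b.1) |(a.2 : ℝ) - b.2|; linarith)
      (by have := le_max_right (Q.d a.1 b.1) |(a.2 : ℝ) - b.2|; linarith)
  linarith

lemma blt_shift_of_q_lt {a b : FB X} {η : ℝ} (h : Q.q a b < η) {δ δ' : ℝ≥0}
    (hδ : η ≤ (δ : ℝ) - (δ' : ℝ)) : Q.blt (a.1, a.2 + δ) (b.1, b.2 + δ') := by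
  unfold QuasiMetric.q at h
  unfold QuasiMetric.blt
  simp only [NNReal.coe_add]
  have h1 : Q.d a.1 b.1 ≤ max (Q.d a.1 b.1) |(a.2 : ℝ) - b.2| := le_max_left _ _
  have h2 : ((b.2:ℝ) - a.2) ≤ ((b.2:ℝ) - a.2) := le_refl _
  have h3 : ((a.2:ℝ) - b.2) ≤ |(a.2 : ℝ) - b.2| := le_abs_self _

  linarith

/-! ### Hq-level lemmas -/

lemma exists_q_le_Hq_left (F G : PFin X) :
    ∀ a ∈ F.1, ∃ b ∈ G.1, Q.q a b ≤ Q.Hq F G := by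
  intro a ha
  have hSf : {s | ∃ b ∈ G.1, s = Q.q a b}.Finite := img_fin G.2.1 _
  have hSn : {s | ∃ b ∈ G.1, s = Q.q a b}.Nonempty := img_ne G.2.2 _
  obtain ⟨b, hb, hbe⟩ := hSn.csInf_mem hSf
  refine ⟨b, hb, ?_⟩
  rw [← hbe]
  have hT : sInf {s | ∃ b ∈ G.1, s = Q.q a b} ∈
      {t | ∃ a ∈ F.1, t = sInf {s | ∃ b ∈ G.1, s = Q.q a b}} := ⟨a, ha, rfl⟩
  have hTf := img_fin F.2.1 (fun a => sInf {s | ∃ b ∈ G.1, s = Q.q a b})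
  exact le_trans (le_csSup hTf.bddAbove hT) (le_max_left _ _)

lemma exists_q_le_Hq_right (F G : PFin X) :
    ∀ b ∈ G.1, ∃ a ∈ F.1, Q.q a b ≤ Q.Hq F G := by
  intro b hb
  have hSf : {s | ∃ a ∈ F.1, s = Q.q a b}.Finite := img_fin F.2.1 _
  have hSn : {s | ∃ a ∈ F.1, s = Q.q a b}.Nonempty := img_ne F.2.2 _
  obtain ⟨a, ha, hae⟩ := hSn.csInf_mem hSf
  refine ⟨a, ha, ?_⟩
  rw [← hae]
  have hT : sInf {s | ∃ a ∈ F.1, s = Q.q a b} ∈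
      {t | ∃ b ∈ G.1, t = sInf {s | ∃ a ∈ F.1, s = Q.q a b}} := ⟨b, hb, rfl⟩
  have hTf := img_fin G.2.1 (fun b => sInf {s | ∃ a ∈ F.1, s = Q.q a b})
  exact le_trans (le_csSup hTf.bddAbove hT) (le_max_right _ _)

lemma Hq_le_intro {F G : PFin X} {ε : ℝ}
    (h1 : ∀ a ∈ F.1, ∃ b ∈ G.1, Q.q a b ≤ ε)
    (h2 : ∀ b ∈ G.1, ∃ a ∈ F.1, Q.q a b ≤ ε) : Q.Hq F G ≤ ε := by
  unfold QuasiMetric.Hq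
  apply max_le
  · apply csSup_le (img_ne F.2.2 _)
    rintro t ⟨a, ha, rfl⟩
    obtain ⟨b, hb, hq⟩ := h1 a ha
    exact le_trans (csInf_le (img_fin G.2.1 _).bddBelow ⟨b, hb, rfl⟩) hq
  · apply csSup_le (img_ne G.2.2 _)
    rintro t ⟨b, hb, rfl⟩
    obtain ⟨a, ha, hq⟩ := h2 b hb
    exact le_trans (csInf_le (img_fin F.2.1 _).bddBelow ⟨a, ha, rfl⟩) hq

lemma Hq_nonneg (F G : PFin X) : 0 ≤ Q.Hq F G := by
  obtain ⟨a, ha⟩ := F.2.2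
  obtain ⟨b, hb, hq⟩ := exists_q_le_Hq_left Q F G a ha
  exact le_trans (q_nonneg Q a b) hq

lemma Hq_lt_elim {F G : PFin X} {ε : ℝ} (h : Q.Hq F G < ε) :
    (∀ a ∈ F.1, ∃ b ∈ G.1, Q.q a b < ε) ∧ (∀ b ∈ G.1, ∃ a ∈ F.1, Q.q a b < ε) := by
  unfold QuasiMetric.Hq at h
  rw [max_lt_iff] at h
  constructor
  · intro a ha
    have h1 : sInf {s | ∃ b ∈ G.1, s = Q.q a b} < ε :=
      lt_of_le_of_lt (le_csSup (img_fin F.2.1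
        (fun a => sInf {s | ∃ b ∈ G.1, s = Q.q a b})).bddAbove ⟨a, ha, rfl⟩) h.1
    obtain ⟨b, hb, hbe⟩ := (img_ne G.2.2 (Q.q a)).csInf_mem (img_fin G.2.1 _)
    exact ⟨b, hb, by rw [← hbe]; exact h1⟩
  · intro b hb
    have h1 : sInf {s | ∃ a ∈ F.1, s = Q.q a b} < ε :=
      lt_of_le_of_lt (le_csSup (img_fin G.2.1
        (fun b => sInf {s | ∃ a ∈ F.1, s = Q.q a b})).bddAbove ⟨b, hb, rfl⟩) h.2
    obtain ⟨a, ha, hae⟩ := (img_ne F.2.2 (fun a => Q.q a b)).csInf_mem (img_fin F.2.1 _)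
    exact ⟨a, ha, by rw [← hae]; exact h1⟩

lemma Hq_triangle (F G H : PFin X) : Q.Hq F H ≤ Q.Hq F G + Q.Hq G H := by
  apply Hq_le_intro
  · intro a ha
    obtain ⟨b, hb, h1⟩ := exists_q_le_Hq_left Q F G a ha
    obtain ⟨c, hc, h2⟩ := exists_q_le_Hq_left Q G H b hb
    exact ⟨c, hc, le_trans (q_triangle Q a b c) (add_le_add h1 h2)⟩
  · intro c hc
    obtain ⟨b, hb, h2⟩ := exists_q_le_Hq_right Q G H c hc
    obtain ⟨a, ha, h1⟩ := exists_q_le_Hq_right Q F G b hb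
    exact ⟨a, ha, le_trans (q_triangle Q a b c) (add_le_add h1 h2)⟩

lemma Hq_zero_of_em {F G : PFin X} (h : Q.em F G) : Q.Hq F G = 0 := by
  refine le_antisymm ?_ (Hq_nonneg Q F G)
  apply Hq_le_intro
  · intro a ha
    obtain ⟨b, hb, hblt⟩ := h.2 a ha
    exact ⟨b, hb, le_of_eq (q_zero_of_blt Q hblt)⟩
  · intro b hb
    obtain ⟨a, ha, hblt⟩ := h.1 b hb
    exact ⟨a, ha, le_of_eq (q_zero_of_blt Q hblt)⟩

lemma Hq_le_bound {C R : ℝ} (hC : ∀ x y, Q.d x y ≤ C) {F G : PFin X}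
    (hR : ∀ b ∈ G.1, (b.2 : ℝ) ≤ R) : Q.Hq F G ≤ C + 2 * R := by
  apply Hq_le_intro
  · intro a ha
    obtain ⟨b, hb⟩ := G.2.2
    refine ⟨b, hb, le_trans (q_le_bound Q hC a b) ?_⟩
    have := hR b hb; linarith
  · intro b hb
    obtain ⟨a, ha⟩ := F.2.2
    refine ⟨a, ha, le_trans (q_le_bound Q hC a b) ?_⟩
    have := hR b hb; linarith

/-- Shift all radii of a finite set up by `δ`. -/
def shiftF (F : PFin X) (δ : ℝ≥0) : PFin X :=
  ⟨(fun p : FB X => (p.1, p.2 + δ)) '' F.1, F.2.1.image _, F.2.2.image _⟩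

lemma mem_shiftF {F : PFin X} {δ : ℝ≥0} {b : FB X} :
    b ∈ (shiftF F δ).1 ↔ ∃ a ∈ F.1, b = (a.1, a.2 + δ) := by
  constructor
  · rintro ⟨a, ha, rfl⟩; exact ⟨a, ha, rfl⟩
  · rintro ⟨a, ha, rfl⟩; exact ⟨a, ha, rfl⟩

lemma Hq_shift_left (F G : PFin X) (δ : ℝ≥0) : Q.Hq (shiftF F δ) G ≤ Q.Hq F G := by
  apply Hq_le_intro
  · intro a' ha'
    obtain ⟨a, ha, rfl⟩ := mem_shiftF.mp ha'
    obtain ⟨b, hb, h⟩ := exists_q_le_Hq_left Q F G a ha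
    exact ⟨b, hb, le_trans (q_shift_left Q a b δ) h⟩
  · intro b hb
    obtain ⟨a, ha, h⟩ := exists_q_le_Hq_right Q F G b hb
    exact ⟨(a.1, a.2 + δ), mem_shiftF.mpr ⟨a, ha, rfl⟩, le_trans (q_shift_left Q a b δ) h⟩

lemma Hq_shift_right (F G : PFin X) (δ : ℝ≥0) :
    Q.Hq F (shiftF G δ) ≤ Q.Hq F G + 2 * (δ : ℝ) := by
  apply Hq_le_intro
  · intro a ha
    obtain ⟨b, hb, h⟩ := exists_q_le_Hq_left Q F G a ha
    exact ⟨(b.1, b.2 + δ), mem_shiftF.mpr ⟨b, hb, rfl⟩,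
      le_trans (q_shift_right Q a b δ) (by linarith)⟩
  · intro b' hb'
    obtain ⟨b, hb, rfl⟩ := mem_shiftF.mp hb'
    obtain ⟨a, ha, h⟩ := exists_q_le_Hq_right Q F G b hb
    exact ⟨a, ha, le_trans (q_shift_right Q a b δ) (by linarith)⟩

/-! ### chain-level lemmas -/

lemma em_chain (c : Q.Chain) {p p' : ℕ} (h : p < p') : Q.em (c.1 p) (c.1 p') := by
  induction p' with
  | zero => omega
  | succ p' ih =>
    rcases Nat.lt_succ_iff_lt_or_eq.mp h with h' | h'
    · exact Q.em_trans (ih h') (c.2 p')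
    · rw [← h']; exact c.2 p

lemma Hq_chain_zero (c : Q.Chain) {p p' : ℕ} (h : p < p') : Q.Hq (c.1 p) (c.1 p') = 0 :=
  Hq_zero_of_em Q (em_chain Q c h)

lemma Hq_chain_mono (c : Q.Chain) (F : PFin X) {p p' : ℕ} (h : p ≤ p') :
    Q.Hq F (c.1 p') ≤ Q.Hq F (c.1 p) := by
  rcases eq_or_lt_of_le h with h' | h'
  · rw [h']
  · have := Hq_triangle Q F (c.1 p) (c.1 p')
    rw [Hq_chain_zero Q c h'] at this
    linarith

lemma Hq_le_of_em {F F' : PFin X} (h : Q.em F F') (B : PFin X) :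
    Q.Hq F B ≤ Q.Hq F' B := by
  have := Hq_triangle Q F F' B
  rw [Hq_zero_of_em Q h] at this
  linarith

lemma radius_le (c : Q.Chain) :
    ∀ m, ∀ p ∈ (c.1 m).1, (p.2 : ℝ) ≤ sSup {t | ∃ p ∈ (c.1 0).1, t = ((p.2 : ℝ))} := by
  intro m
  induction m with
  | zero =>
    intro p hp
    exact le_csSup (img_fin (c.1 0).2.1 (fun p => ((p.2 : ℝ)))).bddAbove ⟨p, hp, rfl⟩
  | succ m ih =>
    intro p hp
    obtain ⟨a, ha, hblt⟩ := (c.2 m).1 p hp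
    have hd := Q.nonneg a.1 p.1
    unfold QuasiMetric.blt at hblt
    have := ih a ha
    linarith

/-! ### Dchain-level lemmas -/

noncomputable def innD (c c' : Q.Chain) (n : ℕ) : ℝ :=
  sInf {s | ∃ m, s = Q.Hq (c.1 n) (c'.1 m)}

lemma dchain_eq (c c' : Q.Chain) :
    Q.Dchain c c' = sSup {t | ∃ n, t = innD Q c c' n} := rfl

lemma innD_set_ne (c c' : Q.Chain) (n : ℕ) :
    {s | ∃ m, s = Q.Hq (c.1 n) (c'.1 m)}.Nonempty := ⟨_, 0, rfl⟩

lemma innD_set_bdd (c c' : Q.Chain) (n : ℕ) :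
    BddBelow {s | ∃ m, s = Q.Hq (c.1 n) (c'.1 m)} := by
  refine ⟨0, ?_⟩
  rintro s ⟨m, rfl⟩
  exact Hq_nonneg Q _ _

lemma innD_nonneg (c c' : Q.Chain) (n : ℕ) : 0 ≤ innD Q c c' n :=
  le_csInf (innD_set_ne Q c c' n) (by rintro s ⟨m, rfl⟩; exact Hq_nonneg Q _ _)

lemma innD_le (c c' : Q.Chain) (n m : ℕ) :
    innD Q c c' n ≤ Q.Hq (c.1 n) (c'.1 m) :=
  csInf_le (innD_set_bdd Q c c' n) ⟨m, rfl⟩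

noncomputable def RG (c : Q.Chain) : ℝ := sSup {t | ∃ p ∈ (c.1 0).1, t = ((p.2 : ℝ))}

lemma innD_le_bound {C : ℝ} (hC : ∀ x y, Q.d x y ≤ C) (c c' : Q.Chain) (n : ℕ) :
    innD Q c c' n ≤ C + 2 * RG Q c' :=
  le_trans (innD_le Q c c' n 0) (Hq_le_bound Q hC (radius_le Q c' 0))

lemma dchain_bddAbove {C : ℝ} (hC : ∀ x y, Q.d x y ≤ C) (c c' : Q.Chain) :
    BddAbove {t | ∃ n, t = innD Q c c' n} := by
  refine ⟨C + 2 * RG Q c', ?_⟩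
  rintro t ⟨n, rfl⟩
  exact innD_le_bound Q hC c c' n

lemma innD_le_dchain {C : ℝ} (hC : ∀ x y, Q.d x y ≤ C) (c c' : Q.Chain) (n : ℕ) :
    innD Q c c' n ≤ Q.Dchain c c' :=
  le_csSup (dchain_bddAbove Q hC c c') ⟨n, rfl⟩

lemma dchain_nonneg {C : ℝ} (hC : ∀ x y, Q.d x y ≤ C) (c c' : Q.Chain) :
    0 ≤ Q.Dchain c c' :=
  le_trans (innD_nonneg Q c c' 0) (innD_le_dchain Q hC c c' 0)

lemma dchain_le_intro {c c' : Q.Chain} {ε : ℝ} (h : ∀ n, innD Q c c' n ≤ ε) :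
    Q.Dchain c c' ≤ ε :=
  csSup_le ⟨_, 0, rfl⟩ (by rintro t ⟨n, rfl⟩; exact h n)

lemma exists_Hq_lt_of_innD_lt {c c' : Q.Chain} {n : ℕ} {ε : ℝ}
    (h : innD Q c c' n < ε) : ∃ m, Q.Hq (c.1 n) (c'.1 m) < ε := by
  obtain ⟨s, hs, hlt⟩ := exists_lt_of_csInf_lt (innD_set_ne Q c c' n) h
  obtain ⟨m, rfl⟩ := hs
  exact ⟨m, hlt⟩

lemma exists_Hq_lt_of_dchain_lt {C : ℝ} (hC : ∀ x y, Q.d x y ≤ C) {c c' : Q.Chain}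
    {ε : ℝ} (h : Q.Dchain c c' < ε) (n : ℕ) : ∃ m, Q.Hq (c.1 n) (c'.1 m) < ε :=
  exists_Hq_lt_of_innD_lt Q (lt_of_le_of_lt (innD_le_dchain Q hC c c' n) h)

lemma dchain_triangle {C : ℝ} (hC : ∀ x y, Q.d x y ≤ C) (c c' c'' : Q.Chain) :
    Q.Dchain c c'' ≤ Q.Dchain c c' + Q.Dchain c' c'' := by
  apply dchain_le_intro
  intro n
  refine le_of_forall_pos_le_add ?_
  intro ε hε
  have h1 : innD Q c c' n < Q.Dchain c c' + ε / 2 :=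
    lt_of_le_of_lt (innD_le_dchain Q hC c c' n) (by linarith)
  obtain ⟨m, hm⟩ := exists_Hq_lt_of_innD_lt Q h1
  have h2 : innD Q c' c'' m < Q.Dchain c' c'' + ε / 2 :=
    lt_of_le_of_lt (innD_le_dchain Q hC c' c'' m) (by linarith)
  obtain ⟨m', hm'⟩ := exists_Hq_lt_of_innD_lt Q h2
  have h3 := Hq_triangle Q (c.1 n) (c'.1 m) (c''.1 m')
  have h4 := innD_le Q c c'' n m'
  linarith

lemma dchain_le_left {C : ℝ} (hC : ∀ x y, Q.d x y ≤ C) {c ct : Q.Chain}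
    (h : Q.chainLE c ct) (c' : Q.Chain) : Q.Dchain c c' ≤ Q.Dchain ct c' := by
  apply dchain_le_intro
  intro n
  obtain ⟨p, hp⟩ := h n
  have h0 : Q.Hq (c.1 n) (ct.1 p) = 0 := Hq_zero_of_em Q hp
  have hle : innD Q c c' n ≤ innD Q ct c' p := by
    apply le_csInf (innD_set_ne Q ct c' p)
    rintro s ⟨m, rfl⟩
    have := Hq_triangle Q (c.1 n) (ct.1 p) (c'.1 m)
    rw [h0] at this
    exact le_trans (innD_le Q c c' n m) (by linarith)
  exact le_trans hle (innD_le_dchain Q hC ct c' p)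

lemma dchain_le_right {C : ℝ} (hC : ∀ x y, Q.d x y ≤ C) {c' ct : Q.Chain}
    (h : Q.chainLE c' ct) (c : Q.Chain) : Q.Dchain c ct ≤ Q.Dchain c c' := by
  apply dchain_le_intro
  intro n
  have hle : innD Q c ct n ≤ innD Q c c' n := by
    apply le_csInf (innD_set_ne Q c c' n)
    rintro s ⟨m, rfl⟩
    obtain ⟨p, hp⟩ := h m
    have h0 : Q.Hq (c'.1 m) (ct.1 p) = 0 := Hq_zero_of_em Q hp
    have := Hq_triangle Q (c.1 n) (c'.1 m) (ct.1 p)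
    rw [h0] at this
    exact le_trans (innD_le Q c ct n p) (by linarith)
  exact le_trans hle (innD_le_dchain Q hC c c' n)

lemma dchain_congr_left {C : ℝ} (hC : ∀ x y, Q.d x y ≤ C) {c ct : Q.Chain}
    (h : Q.chainEquiv c ct) (c' : Q.Chain) : Q.Dchain c c' = Q.Dchain ct c' :=
  le_antisymm (dchain_le_left Q hC h.1 c') (dchain_le_left Q hC h.2 c')

lemma dchain_congr_right {C : ℝ} (hC : ∀ x y, Q.d x y ≤ C) {c' ct : Q.Chain}
    (h : Q.chainEquiv c' ct) (c : Q.Chain) : Q.Dchain c c' = Q.Dchain c ct :=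
  le_antisymm (dchain_le_right Q hC h.2 c) (dchain_le_right Q hC h.1 c)

end Stmt15Aux

/-- `(CBX, D)` is sequentially Yoneda-complete. -/
theorem stmt15 {X : Type} (Q : QuasiMetric X) (hT1 : Q.IsT1) (hB : Q.Bounded)
    (hY : Q.SeqYonedaComplete) :
    SeqYonedaCompleteD Q.D := by
  classical
  intro u hu
  obtain ⟨C, hC⟩ := hB
  open Stmt15Aux in
  set c : ℕ → Q.Chain := fun i => Quotient.out (u i) with hc
  have hpow : ∀ j : ℕ, (0:ℝ) < (1/2)^j := fun j => by positivity
  have hcau : ∀ j : ℕ, ∃ N, ∀ n m, N ≤ n → n ≤ m → Q.D (u n) (u m) < (1/2:ℝ)^(j+3) :=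
    fun j => hu _ (hpow _)
  choose N hN using hcau
  have hN' : ∀ j n m, N j ≤ n → n ≤ m → Q.Dchain (c n) (c m) < (1/2:ℝ)^(j+3) :=
    fun j n m h1 h2 => hN j n m h1 h2
  -- the subsequence indices
  set k : ℕ → ℕ := fun j => Nat.rec (N 0) (fun j ih => max (ih + 1) (N (j+1))) j with hk
  have hksucc : ∀ j, k (j+1) = max (k j + 1) (N (j+1)) := fun j => rfl
  have hkstrict : StrictMono k := strictMono_nat_of_lt_succ (fun j => by rw [hksucc]; omega)
  have hkN : ∀ j, N j ≤ k j := by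
    intro j
    cases j with
    | zero => exact le_refl _
    | succ j => rw [hksucc]; omega
  have hkj : ∀ j, j ≤ k j := fun j => hkstrict.le_apply
  have hDk : ∀ j m, k j ≤ m → Q.Dchain (c (k j)) (c m) < (1/2:ℝ)^(j+3) :=
    fun j m h => hN' j (k j) m (hkN j) h
  -- recursive choice of the indices inside each chain
  have step : ∀ j prev : ℕ, ∃ p : ℕ,
      Q.Hq ((c (k j)).1 prev) ((c (k (j+1))).1 p) < (1/2:ℝ)^(j+3) ∧
      ∀ i ≤ k (j+1), ∀ n'' ≤ j+1,
        Q.Hq ((c i).1 n'') ((c (k (j+1))).1 p) <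
          innD Q (c i) (c (k (j+1))) n'' + (1/2:ℝ)^(j+1) := by
    intro j prev
    have hD := hDk j (k (j+1)) (le_of_lt (hkstrict (Nat.lt_succ_self j)))
    obtain ⟨p0, hp0⟩ := exists_Hq_lt_of_dchain_lt Q hC hD prev
    have h2 : ∀ i n'' : ℕ, ∃ p, Q.Hq ((c i).1 n'') ((c (k (j+1))).1 p) <
        innD Q (c i) (c (k (j+1))) n'' + (1/2:ℝ)^(j+1) :=
      fun i n'' => exists_Hq_lt_of_innD_lt Q (lt_add_of_pos_right _ (hpow _))
    choose w hw using h2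
    refine ⟨max p0 ((Finset.range (k (j+1) + 1)).sup fun i =>
      (Finset.range (j+2)).sup fun n'' => w i n''), ?_, ?_⟩
    · exact lt_of_le_of_lt (Hq_chain_mono Q (c (k (j+1))) _ (le_max_left _ _)) hp0
    · intro i hi n'' hn''
      have hle : w i n'' ≤ max p0 ((Finset.range (k (j+1) + 1)).sup fun i =>
          (Finset.range (j+2)).sup fun n'' => w i n'') := by
        refine le_trans ?_ (le_max_right _ _)
        refine le_trans (Finset.le_sup (f := fun n'' => w i n'')
          (Finset.mem_range.mpr (Nat.lt_succ_of_le hn''))) ?_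
        exact Finset.le_sup (f := fun i => (Finset.range (j+2)).sup fun n'' => w i n'')
          (Finset.mem_range.mpr (Nat.lt_succ_of_le hi))
      exact lt_of_le_of_lt (Hq_chain_mono Q (c (k (j+1))) _ hle) (hw i n'')
  have base : ∃ p : ℕ, ∀ i ≤ k 0, ∀ n'' ≤ (0:ℕ),
      Q.Hq ((c i).1 n'') ((c (k 0)).1 p) < innD Q (c i) (c (k 0)) n'' + (1/2:ℝ)^(0:ℕ) := by
    have h2 : ∀ i n'' : ℕ, ∃ p, Q.Hq ((c i).1 n'') ((c (k 0)).1 p) <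
        innD Q (c i) (c (k 0)) n'' + (1/2:ℝ)^(0:ℕ) :=
      fun i n'' => exists_Hq_lt_of_innD_lt Q (lt_add_of_pos_right _ (hpow _))
    choose w hw using h2
    refine ⟨(Finset.range (k 0 + 1)).sup fun i => w i 0, ?_⟩
    intro i hi n'' hn''
    have hn0 : n'' = 0 := Nat.le_zero.mp hn''
    subst hn0
    have hle : w i 0 ≤ (Finset.range (k 0 + 1)).sup fun i => w i 0 :=
      Finset.le_sup (f := fun i => w i 0) (Finset.mem_range.mpr (Nat.lt_succ_of_le hi))
    exact lt_of_le_of_lt (Hq_chain_mono Q (c (k 0)) _ hle) (hw i 0)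
  choose g hg1 hg2 using step
  obtain ⟨p₀, hp₀⟩ := base
  set nn : ℕ → ℕ := fun j => Nat.rec p₀ (fun j ih => g j ih) j with hnn
  have hP1 : ∀ j, Q.Hq ((c (k j)).1 (nn j)) ((c (k (j+1))).1 (nn (j+1))) < (1/2:ℝ)^(j+3) :=
    fun j => hg1 j (nn j)
  have hP2 : ∀ j, ∀ i ≤ k j, ∀ n'' ≤ j,
      Q.Hq ((c i).1 n'') ((c (k j)).1 (nn j)) <
        innD Q (c i) (c (k j)) n'' + (1/2:ℝ)^j := by
    intro j
    cases j with
    | zero => exact hp₀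
    | succ j => exact hg2 j (nn j)
  -- the limit chain
  set G : ℕ → PFin X := fun j => shiftF ((c (k j)).1 (nn j)) ((1/2 : ℝ≥0)^j) with hG
  have hδ : ∀ j : ℕ, (((1/2:ℝ≥0)^j : ℝ≥0) : ℝ) = (1/2:ℝ)^j := fun j => by push_cast; ring
  have hGchain : ∀ j, Q.em (G j) (G (j+1)) := by
    intro j
    have h := Hq_lt_elim Q (hP1 j)
    have hpw : (1/2:ℝ)^(j+3) ≤ (((1/2:ℝ≥0)^j : ℝ≥0) : ℝ) - (((1/2:ℝ≥0)^(j+1) : ℝ≥0) : ℝ) := by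
      rw [hδ, hδ]
      have h1 : (1/2:ℝ)^(j+1) = (1/2)^j * (1/2) := pow_succ _ _
      have h3 : (1/2:ℝ)^(j+3) = (1/2)^j * (1/8) := by rw [pow_add]; norm_num
      nlinarith [hpow j]
    constructor
    · intro b hb
      obtain ⟨b0, hb0, rfl⟩ := mem_shiftF.mp hb
      obtain ⟨a0, ha0, hq⟩ := h.2 b0 hb0
      exact ⟨(a0.1, a0.2 + (1/2:ℝ≥0)^j), mem_shiftF.mpr ⟨a0, ha0, rfl⟩,
        blt_shift_of_q_lt Q hq hpw⟩
    · intro a ha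
      obtain ⟨a0, ha0, rfl⟩ := mem_shiftF.mp ha
      obtain ⟨b0, hb0, hq⟩ := h.1 a0 ha0
      exact ⟨(b0.1, b0.2 + (1/2:ℝ≥0)^(j+1)), mem_shiftF.mpr ⟨b0, hb0, rfl⟩,
        blt_shift_of_q_lt Q hq hpw⟩
  set xch : Q.Chain := ⟨G, hGchain⟩ with hxch
  set L : Q.CBX := Quotient.mk Q.chainSetoid xch with hL
  have houtL : Q.chainEquiv (Quotient.out L) xch := Quotient.exact (Quotient.out_eq L)
  -- uniform bound on D (u m) y
  have hDub : ∀ (m : ℕ) (y : Q.CBX), Q.D (u m) y ≤ C + 2 * RG Q (Quotient.out y) :=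
    fun m y => dchain_le_intro Q (fun n => innD_le_bound Q hC _ _ n)
  -- limsup claim : D (u m) x → 0
  have hlim : ∀ ε : ℝ, 0 < ε → ∃ M, ∀ m, M ≤ m → Q.Dchain (c m) xch ≤ ε := by
    intro ε hε
    obtain ⟨J, hJ⟩ : ∃ J : ℕ, (1/2:ℝ)^J < ε/8 :=
      exists_pow_lt_of_lt_one (by linarith) (by norm_num)
    refine ⟨N J, fun m hm => ?_⟩
    apply dchain_le_intro
    intro n'
    set j := max n' (max m J) with hj
    have hn'j : n' ≤ j := le_max_left _ _
    have hmj : m ≤ j := le_trans (le_max_left _ _) (le_max_right _ _)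
    have hJj : J ≤ j := le_trans (le_max_right _ _) (le_max_right _ _)
    have hmkj : m ≤ k j := le_trans hmj (hkj j)
    have hd : Q.Dchain (c m) (c (k j)) < (1/2:ℝ)^(J+3) := hN' J m (k j) hm hmkj
    have hβ : innD Q (c m) (c (k j)) n' < (1/2:ℝ)^(J+3) :=
      lt_of_le_of_lt (innD_le_dchain Q hC _ _ _) hd
    have h2 := hP2 j m hmkj n' hn'j
    have hjJ : (1/2:ℝ)^j ≤ (1/2)^J := pow_le_pow_of_le_one (by norm_num) (by norm_num) hJj
    have h4 : Q.Hq ((c m).1 n') (G j) ≤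
        Q.Hq ((c m).1 n') ((c (k j)).1 (nn j)) + 2 * (((1/2:ℝ≥0)^j : ℝ≥0) : ℝ) :=
      Hq_shift_right Q _ _ _
    rw [hδ] at h4
    have h5 : innD Q (c m) xch n' ≤ Q.Hq ((c m).1 n') (G j) := innD_le Q (c m) xch n' j
    have hpj : (1/2:ℝ)^(J+3) ≤ (1/2:ℝ)^J :=
      pow_le_pow_of_le_one (by norm_num) (by norm_num) (by omega)
    linarith
  refine ⟨L, ?_⟩
  intro y
  set cy : Q.Chain := Quotient.out y with hcy
  have hDL : Q.D L y = Q.Dchain xch cy := dchain_congr_left Q hC houtL cy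
  have hTailne : ∀ n : ℕ, {t | ∃ m, n ≤ m ∧ t = Q.D (u m) y}.Nonempty :=
    fun n => ⟨_, n, le_refl n, rfl⟩
  have hTailbdd : ∀ n : ℕ, BddAbove {t | ∃ m, n ≤ m ∧ t = Q.D (u m) y} := by
    intro n
    refine ⟨C + 2 * RG Q cy, ?_⟩
    rintro t ⟨m, hm, rfl⟩
    exact hDub m y
  have hA : ∀ n : ℕ, Q.Dchain xch cy ≤ supTail Q.D u y n := by
    intro n
    apply dchain_le_intro
    intro j
    set j' := max j n with hj'
    have hjj' : j ≤ j' := le_max_left _ _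
    have hnj' : n ≤ j' := le_max_right _ _
    have s1 : innD Q xch cy j ≤ innD Q xch cy j' := by
      apply le_csInf (innD_set_ne Q xch cy j')
      rintro s ⟨m, rfl⟩
      rcases eq_or_lt_of_le hjj' with he | hlt
      · rw [← he]; exact innD_le Q xch cy j m
      · exact le_trans (innD_le Q xch cy j m) (Hq_le_of_em Q (em_chain Q xch hlt) _)
    have s2 : innD Q xch cy j' ≤ innD Q (c (k j')) cy (nn j') := by
      apply le_csInf (innD_set_ne Q (c (k j')) cy (nn j'))
      rintro s ⟨m, rfl⟩
      exact le_trans (innD_le Q xch cy j' m)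
        (Hq_shift_left Q ((c (k j')).1 (nn j')) (cy.1 m) ((1/2:ℝ≥0)^j'))
    have s3 : innD Q (c (k j')) cy (nn j') ≤ Q.Dchain (c (k j')) cy :=
      innD_le_dchain Q hC _ _ _
    have s4 : Q.Dchain (c (k j')) cy ≤ supTail Q.D u y n := by
      show Q.Dchain (c (k j')) cy ≤ sSup {t | ∃ m, n ≤ m ∧ t = Q.D (u m) y}
      exact le_csSup (hTailbdd n) ⟨k j', le_trans hnj' (hkj j'), rfl⟩
    linarith
  have hB2 : ∀ η : ℝ, 0 < η → ∃ n : ℕ, supTail Q.D u y n ≤ Q.Dchain xch cy + η := by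
    intro η hη
    obtain ⟨M, hM⟩ := hlim η hη
    refine ⟨M, ?_⟩
    show sSup {t | ∃ m, M ≤ m ∧ t = Q.D (u m) y} ≤ Q.Dchain xch cy + η
    apply csSup_le (hTailne M)
    rintro t ⟨m, hm, rfl⟩
    have t1 := dchain_triangle Q hC (c m) xch cy
    have t2 := hM m hm
    show Q.Dchain (c m) cy ≤ Q.Dchain xch cy + η
    linarith
  have hbddB : BddBelow (Set.range (supTail Q.D u y)) := by
    refine ⟨0, ?_⟩
    rintro t ⟨n, rfl⟩
    have h1 : Q.D (u n) y ≤ supTail Q.D u y n := by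
      show Q.D (u n) y ≤ sSup {t | ∃ m, n ≤ m ∧ t = Q.D (u m) y}
      exact le_csSup (hTailbdd n) ⟨n, le_refl n, rfl⟩
    exact le_trans (dchain_nonneg Q hC (c n) cy) h1
  apply le_antisymm
  · rw [hDL]
    exact le_csInf (Set.range_nonempty _) (by rintro b ⟨n, rfl⟩; exact hA n)
  · rw [hDL]
    refine le_of_forall_pos_le_add ?_
    intro η hη
    obtain ⟨n, hn⟩ := hB2 η hη
    have h1 : sInf (Set.range (supTail Q.D u y)) ≤ supTail Q.D u y n :=
      csInf_le hbddB ⟨n, rfl⟩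
    linarith
end
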